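/- arXiv:1907.08652 — 3 statements merged into one kernel-verified Lean document; each statement's English description precedes it below -/
import Mathlib

section
/- Let f : M → M be a hyperbolic homeomorphism with local product structure on a compact metric space (M,d), let A : M → GL(d,ℝ) be a ν-Hölder continuous map and α an automorphism of GL(d,ℝ), and suppose the α-twisted cocycle A_α generated by A over f is fiber-bunched. Then for every x ∈ M and all y, z in the stable set W^s(x), the sequence of matrices α^{-n}(A_α^n(z)^{-1} · A_α^n(y)) converges as n → +∞; its limit H^{s,A,α}_{yz} is an invertible matrix, called the stable holonomy from y to z. Similarly, for all y, z ∈ W^u(x) the sequence α^n(A_α^{-n}(z)^{-1} · A_α^{-n}(y)) converges as n → +∞ to an invertible matrix H^{u,A,α}_{yz}, the unstable holonomy. -/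
open scoped Matrix.Norms.L2Operator

noncomputable section

/-- The `α`-twisted cocycle generated by `A` over `f`, at nonnegative times. -/
def twcN {M G : Type*} [Group G] (f : Equiv.Perm M) (α : MulAut G) (A : M → G) :
    ℕ → M → G
  | 0, _ => 1
  | n + 1, x => A ((f ^ n) x) * α (twcN f α A n x)

/-- The `α`-twisted cocycle generated by `A` over `f`, at all integer times. -/
def twc {M G : Type*} [Group G] (f : Equiv.Perm M) (α : MulAut G) (A : M → G) :
    ℤ → M → G
  | Int.ofNat n, x => twcN f α A n x
  | Int.negSucc n, x =>
      (α ^ (Int.negSucc n)) ((twcN f α A (n + 1) ((f ^ (Int.negSucc n)) x))⁻¹)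

/-- The local stable set `W^s_ε(x)`. -/
def localStable {M : Type*} [MetricSpace M] (f : Equiv.Perm M) (ε : ℝ) (x : M) :
    Set M :=
  {y | ∀ n : ℕ, dist ((f ^ n) x) ((f ^ n) y) ≤ ε}

/-- The local unstable set `W^u_ε(x)`. -/
def localUnstable {M : Type*} [MetricSpace M] (f : Equiv.Perm M) (ε : ℝ) (x : M) :
    Set M :=
  {y | ∀ n : ℕ, dist ((f⁻¹ ^ n) x) ((f⁻¹ ^ n) y) ≤ ε}

/-- The global stable set `W^s(x) = ⋃_{n ≥ 0} f^{-n}(W^s_ε(f^n(x)))`. -/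
def globalStable {M : Type*} [MetricSpace M] (f : Equiv.Perm M) (ε : ℝ) (x : M) :
    Set M :=
  {y | ∃ n : ℕ, (f ^ n) y ∈ localStable f ε ((f ^ n) x)}

/-- The global unstable set `W^u(x) = ⋃_{n ≥ 0} f^{n}(W^u_ε(f^{-n}(x)))`. -/
def globalUnstable {M : Type*} [MetricSpace M] (f : Equiv.Perm M) (ε : ℝ) (x : M) :
    Set M :=
  {y | ∃ n : ℕ, (f⁻¹ ^ n) y ∈ localUnstable f ε ((f⁻¹ ^ n) x)}

/-- `f` is a hyperbolic homeomorphism with local product structure, with constants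
`C, ε, λ, τ`. -/
structure IsHyperbolicLPS {M : Type*} [MetricSpace M] (f : M ≃ₜ M)
    (C ε lam τ : ℝ) : Prop where
  C_pos : 0 < C
  eps_pos : 0 < ε
  lam_pos : 0 < lam
  tau_pos : 0 < τ
  stable_contr : ∀ x y₁ y₂ : M, y₁ ∈ localStable f.toEquiv ε x →
    y₂ ∈ localStable f.toEquiv ε x → ∀ n : ℕ,
      dist ((f.toEquiv ^ n) y₁) ((f.toEquiv ^ n) y₂) ≤
        C * Real.exp (-lam * n) * dist y₁ y₂
  unstable_contr : ∀ x y₁ y₂ : M, y₁ ∈ localUnstable f.toEquiv ε x →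
    y₂ ∈ localUnstable f.toEquiv ε x → ∀ n : ℕ,
      dist ((f.toEquiv⁻¹ ^ n) y₁) ((f.toEquiv⁻¹ ^ n) y₂) ≤
        C * Real.exp (-lam * n) * dist y₁ y₂
  bracket : ∃ br : {p : M × M // dist p.1 p.2 ≤ τ} → M, Continuous br ∧
    ∀ p : {p : M × M // dist p.1 p.2 ≤ τ},
      localStable f.toEquiv ε p.1.1 ∩ localUnstable f.toEquiv ε p.1.2 = {br p}

/-- `A` is `ν`-Hölder continuous (w.r.t. the operator norm on matrices). -/
def IsHolder {M : Type*} [MetricSpace M] {d : ℕ} (ν : ℝ)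
    (A : M → GL (Fin d) ℝ) : Prop :=
  ∃ C > 0, ∀ x y : M,
    ‖(A x : Matrix (Fin d) (Fin d) ℝ) - (A y : Matrix (Fin d) (Fin d) ℝ)‖ ≤
      C * dist x y ^ ν

/-- The fiber-bunching inequalities (i), (ii), (iii) with constants `ρ, θ`. -/
def FiberBunchedWith {M : Type*} [MetricSpace M] {d : ℕ} (f : Equiv.Perm M)
    (α : MulAut (GL (Fin d) ℝ)) (A : M → GL (Fin d) ℝ) (ρ θ : ℝ) : Prop :=
  ∃ C > 0,
    (∀ (n : ℤ) (x : M),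
      ‖(((α ^ (-n)) (twc f α A n x) : GL (Fin d) ℝ) : Matrix (Fin d) (Fin d) ℝ)‖ *
        ‖(((α ^ (-n)) ((twc f α A n x)⁻¹) : GL (Fin d) ℝ) : Matrix (Fin d) (Fin d) ℝ)‖ <
        C * Real.exp (θ * |(n : ℝ)|)) ∧
    (∀ (n : ℤ) (T₁ T₂ : GL (Fin d) ℝ),
      ‖(((α ^ n) T₁ : GL (Fin d) ℝ) : Matrix (Fin d) (Fin d) ℝ) -
          (((α ^ n) T₂ : GL (Fin d) ℝ) : Matrix (Fin d) (Fin d) ℝ)‖ ≤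
        C * Real.exp (ρ * |(n : ℝ)|) *
          ‖(T₁ : Matrix (Fin d) (Fin d) ℝ) - (T₂ : Matrix (Fin d) (Fin d) ℝ)‖) ∧
    (∀ (n : ℤ) (T : GL (Fin d) ℝ),
      ‖(((α ^ n) T : GL (Fin d) ℝ) : Matrix (Fin d) (Fin d) ℝ)‖ ≤
        C * Real.exp (ρ * |(n : ℝ)|) * ‖(T : Matrix (Fin d) (Fin d) ℝ)‖)

/-- The twisted cocycle generated by `A` is fiber-bunched. -/
def FiberBunched {M : Type*} [MetricSpace M] {d : ℕ} (f : Equiv.Perm M)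
    (α : MulAut (GL (Fin d) ℝ)) (A : M → GL (Fin d) ℝ) (ν lam : ℝ) : Prop :=
  ∃ ρ θ : ℝ, 0 < ρ ∧ 0 < θ ∧ 5 * ρ + 2 * θ < ν * lam ∧ FiberBunchedWith f α A ρ θ

/-- `H` is the stable holonomy `H^{s,A,α}_{a b}`. -/
def IsStableHol {M : Type*} [MetricSpace M] {d : ℕ} (f : Equiv.Perm M)
    (α : MulAut (GL (Fin d) ℝ)) (A : M → GL (Fin d) ℝ) (a b : M)
    (H : GL (Fin d) ℝ) : Prop :=
  Filter.Tendsto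
    (fun n : ℕ =>
      (((α ^ (-(n : ℤ))) ((twc f α A n b)⁻¹ * twc f α A n a) : GL (Fin d) ℝ) :
        Matrix (Fin d) (Fin d) ℝ))
    Filter.atTop (nhds (H : Matrix (Fin d) (Fin d) ℝ))

/-- `H` is the unstable holonomy `H^{u,A,α}_{a b}`. -/
def IsUnstableHol {M : Type*} [MetricSpace M] {d : ℕ} (f : Equiv.Perm M)
    (α : MulAut (GL (Fin d) ℝ)) (A : M → GL (Fin d) ℝ) (a b : M)
    (H : GL (Fin d) ℝ) : Prop :=
  Filter.Tendsto
    (fun n : ℕ =>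
      (((α ^ (n : ℤ)) ((twc f α A (-(n : ℤ)) b)⁻¹ * twc f α A (-(n : ℤ)) a) :
          GL (Fin d) ℝ) : Matrix (Fin d) (Fin d) ℝ))
    Filter.atTop (nhds (H : Matrix (Fin d) (Fin d) ℝ))

end


noncomputable section HolonomyAux

open scoped Matrix.Norms.L2Operator

namespace HolonomyAux

lemma zpow_apply_zpow {G : Type*} [Group G] (α : MulAut G) (a b : ℤ) (g : G) :
    (α ^ a) ((α ^ b) g) = (α ^ (a + b)) g := by
  rw [zpow_add]; rfl

lemma twc_coe {M G : Type*} [Group G] (f : Equiv.Perm M) (α : MulAut G) (A : M → G)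
    (n : ℕ) (x : M) : twc f α A (n : ℤ) x = twcN f α A n x := rfl

lemma twcN_succ {M G : Type*} [Group G] (f : Equiv.Perm M) (α : MulAut G) (A : M → G)
    (n : ℕ) (x : M) :
    twcN f α A (n + 1) x = A ((f ^ n) x) * α (twcN f α A n x) := rfl

lemma twc_one {M G : Type*} [Group G] (f : Equiv.Perm M) (α : MulAut G) (A : M → G)
    (x : M) : twc f α A (1 : ℤ) x = A x := by
  show twcN f α A 1 x = A x
  rw [twcN_succ]
  have h0 : twcN f α A 0 x = 1 := rfl
  rw [h0, map_one, mul_one, pow_zero]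
  rfl

lemma twcN_succ_left {M G : Type*} [Group G] (f : Equiv.Perm M) (α : MulAut G) (A : M → G)
    (n : ℕ) (x : M) :
    twcN f α A (n + 1) x = twcN f α A n (f x) * (α ^ n) (A x) := by
  induction n generalizing x with
  | zero => simp [twcN]
  | succ n ih =>
      rw [twcN_succ, ih, twcN_succ]
      have h1 : (f ^ (n+1)) x = (f ^ n) (f x) := by
        rw [pow_succ]; rfl
      rw [map_mul, h1, mul_assoc]
      congr 1
      congr 1
      rw [pow_succ']
      rfl

lemma twc_neg {M G : Type*} [Group G] (f : Equiv.Perm M) (α : MulAut G) (A : M → G)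
    (n : ℕ) (x : M) :
    twc f α A (-(n : ℤ)) x =
      (α ^ (-(n : ℤ))) ((twcN f α A n ((f⁻¹ ^ n) x))⁻¹) := by
  cases n with
  | zero => simp [twc, twcN]
  | succ n =>
      have h : (-(((n:ℕ)+1 : ℕ) : ℤ)) = Int.negSucc n := rfl
      have hp : (f ^ (Int.negSucc n)) x = (f⁻¹ ^ (n+1)) x := by
        rw [show (Int.negSucc n) = -((n+1 : ℕ) : ℤ) from rfl, zpow_neg, zpow_natCast, inv_pow]
      rw [h]
      show (α ^ (Int.negSucc n)) ((twcN f α A (n + 1) ((f ^ (Int.negSucc n)) x))⁻¹) = _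
      rw [hp]

/-- The stable holonomy approximating sequence. -/
def stableH {M G : Type*} [Group G] (f : Equiv.Perm M) (α : MulAut G) (A : M → G)
    (y z : M) (n : ℕ) : G :=
  (α ^ (-(n:ℤ))) ((twc f α A (n:ℤ) z)⁻¹ * twc f α A (n:ℤ) y)

def stableP {M G : Type*} [Group G] (f : Equiv.Perm M) (α : MulAut G) (A : M → G)
    (z : M) (n : ℕ) : G := (α ^ (-(n:ℤ))) (twc f α A (n:ℤ) z)

def stableE {M G : Type*} [Group G] (f : Equiv.Perm M) (α : MulAut G) (A : M → G)
    (y z : M) (n : ℕ) : G :=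
  (α ^ (-((n+1:ℕ):ℤ))) ((A ((f ^ n) z))⁻¹ * A ((f ^ n) y))

lemma alpha_shift {G : Type*} [Group G] (α : MulAut G) (n : ℕ) (g : G) :
    (α ^ (-((n+1:ℕ):ℤ))) (α g) = (α ^ (-(n:ℤ))) g := by
  have h : α g = (α ^ (1:ℤ)) g := by rw [zpow_one]
  rw [h, zpow_apply_zpow]
  congr 1
  push_cast
  ring

lemma stableH_succ {M G : Type*} [Group G] (f : Equiv.Perm M) (α : MulAut G) (A : M → G)
    (y z : M) (n : ℕ) :
    stableH f α A y z (n+1) =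
      (stableP f α A z n)⁻¹ * stableE f α A y z n * stableP f α A z n *
        stableH f α A y z n := by
  unfold stableH stableP stableE
  rw [twc_coe, twc_coe, twc_coe, twc_coe, twcN_succ, twcN_succ]
  rw [mul_inv_rev, map_mul, map_mul, map_mul, map_inv, map_inv, map_mul]
  rw [alpha_shift, alpha_shift, map_mul]
  simp only [map_inv]
  group

/-- The unstable holonomy approximating sequence. -/
def unstH {M G : Type*} [Group G] (f : Equiv.Perm M) (α : MulAut G) (A : M → G)
    (y z : M) (n : ℕ) : G :=
  (α ^ (n:ℤ)) ((twc f α A (-(n:ℤ)) z)⁻¹ * twc f α A (-(n:ℤ)) y)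

def unstQ {M G : Type*} [Group G] (f : Equiv.Perm M) (α : MulAut G) (A : M → G)
    (z : M) (n : ℕ) : G := twcN f α A n ((f⁻¹ ^ n) z)

def unstE {M G : Type*} [Group G] (f : Equiv.Perm M) (α : MulAut G) (A : M → G)
    (y z : M) (n : ℕ) : G :=
  (α ^ n) (A ((f⁻¹ ^ (n+1)) z) * (A ((f⁻¹ ^ (n+1)) y))⁻¹)

lemma unstH_eq {M G : Type*} [Group G] (f : Equiv.Perm M) (α : MulAut G) (A : M → G)
    (y z : M) (n : ℕ) :
    unstH f α A y z n = unstQ f α A z n * (unstQ f α A y n)⁻¹ := by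
  unfold unstH unstQ
  rw [twc_neg, twc_neg, map_inv, inv_inv, ← map_mul, zpow_apply_zpow]
  rw [add_neg_cancel]
  rfl

lemma unstH_succ {M G : Type*} [Group G] (f : Equiv.Perm M) (α : MulAut G) (A : M → G)
    (y z : M) (n : ℕ) :
    unstH f α A y z (n+1) =
      unstQ f α A z n * unstE f α A y z n * (unstQ f α A z n)⁻¹ *
        unstH f α A y z n := by
  have hpt : ∀ v : M, f ((f⁻¹ ^ (n+1)) v) = (f⁻¹ ^ n) v := by
    intro v
    have h : f * f⁻¹ ^ (n+1) = f⁻¹ ^ n := by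
      rw [pow_succ']
      group
    calc f ((f⁻¹ ^ (n+1)) v) = (f * f⁻¹ ^ (n+1)) v := rfl
      _ = (f⁻¹ ^ n) v := by rw [h]
  rw [unstH_eq, unstH_eq, unstQ, unstQ, twcN_succ_left, twcN_succ_left, hpt, hpt]
  unfold unstQ unstE
  rw [mul_inv_rev, map_mul, map_inv]
  group

section Analysis

/-- A sequence of matrices whose consecutive differences are geometrically small relative
to the current norm converges. -/
lemma tendsto_of_ratio {d : ℕ} (u : ℕ → Matrix (Fin d) (Fin d) ℝ) (c q : ℝ) (hc : 0 ≤ c)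
    (hq0 : 0 ≤ q) (hq1 : q < 1)
    (h : ∀ n, ‖u (n+1) - u n‖ ≤ c * q ^ n * ‖u n‖) :
    ∃ L, Filter.Tendsto u Filter.atTop (nhds L) := by
  have hgeom : ∀ n : ℕ, ∑ i ∈ Finset.range n, q ^ i ≤ (1 - q)⁻¹ := by
    intro n
    have := Summable.sum_le_tsum (Finset.range n) (fun i _ => pow_nonneg hq0 i)
      (summable_geometric_of_lt_one hq0 hq1)
    rwa [tsum_geometric_of_lt_one hq0 hq1] at this
  set B : ℝ := ‖u 0‖ * Real.exp (c * (1 - q)⁻¹) with hB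
  have hbound : ∀ n, ‖u n‖ ≤ ‖u 0‖ * Real.exp (c * ∑ i ∈ Finset.range n, q ^ i) := by
    intro n
    induction n with
    | zero => simp
    | succ n ih =>
        have h1 : ‖u (n+1)‖ ≤ (1 + c * q ^ n) * ‖u n‖ := by
          have := h n
          have h2 : ‖u (n+1)‖ ≤ ‖u n‖ + ‖u (n+1) - u n‖ := by
            have := norm_add_le (u n) (u (n+1) - u n); simpa using this
          nlinarith [norm_nonneg (u n)]
        have h3 : (1 + c * q ^ n) ≤ Real.exp (c * q ^ n) := by
          have := Real.add_one_le_exp (c * q ^ n); linarith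
        calc ‖u (n+1)‖ ≤ (1 + c * q ^ n) * ‖u n‖ := h1
          _ ≤ Real.exp (c * q ^ n) * (‖u 0‖ * Real.exp (c * ∑ i ∈ Finset.range n, q ^ i)) := by
              apply mul_le_mul h3 ih (norm_nonneg _)
              positivity
          _ = ‖u 0‖ * Real.exp (c * ∑ i ∈ Finset.range (n+1), q ^ i) := by
              rw [Finset.sum_range_succ]
              rw [mul_add, Real.exp_add]
              ring
  have hB' : ∀ n, ‖u n‖ ≤ B := by
    intro n
    refine (hbound n).trans ?_
    rw [hB]
    have : Real.exp (c * ∑ i ∈ Finset.range n, q ^ i) ≤ Real.exp (c * (1 - q)⁻¹) :=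
      Real.exp_le_exp.2 (by
        nlinarith [hgeom n,
          Finset.sum_nonneg (fun i (_ : i ∈ Finset.range n) => pow_nonneg hq0 i)])
    nlinarith [norm_nonneg (u 0), Real.exp_pos (c * ∑ i ∈ Finset.range n, q ^ i)]
  have hcauchy : CauchySeq u := by
    apply cauchySeq_of_le_geometric q (c * B) hq1
    intro n
    rw [dist_eq_norm, norm_sub_rev]
    calc ‖u (n+1) - u n‖ ≤ c * q ^ n * ‖u n‖ := h n
      _ ≤ c * q ^ n * B := by
          apply mul_le_mul_of_nonneg_left (hB' n); positivity
      _ = c * B * q ^ n := by ring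
  exact cauchySeq_tendsto_of_complete hcauchy

lemma conj_sub_one {d : ℕ} (P E H : GL (Fin d) ℝ) :
    ((P⁻¹ * E * P * H : GL (Fin d) ℝ) : Matrix (Fin d) (Fin d) ℝ) - (H : Matrix (Fin d) (Fin d) ℝ)
      = ((P⁻¹ : GL (Fin d) ℝ) : Matrix (Fin d) (Fin d) ℝ) *
        ((E : Matrix (Fin d) (Fin d) ℝ) - 1) *
        ((P : GL (Fin d) ℝ) : Matrix (Fin d) (Fin d) ℝ) *
        ((H : GL (Fin d) ℝ) : Matrix (Fin d) (Fin d) ℝ) := by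
  have h2 : ((P⁻¹ : GL (Fin d) ℝ) : Matrix (Fin d) (Fin d) ℝ) * (P : Matrix (Fin d) (Fin d) ℝ) = 1 :=
    P.inv_mul
  simp only [Units.val_mul]
  rw [mul_sub, mul_one, sub_mul, sub_mul, h2, one_mul]

lemma conj_sub_one' {d : ℕ} (Q E H : GL (Fin d) ℝ) :
    ((Q * E * Q⁻¹ * H : GL (Fin d) ℝ) : Matrix (Fin d) (Fin d) ℝ) - (H : Matrix (Fin d) (Fin d) ℝ)
      = ((Q : GL (Fin d) ℝ) : Matrix (Fin d) (Fin d) ℝ) *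
        ((E : Matrix (Fin d) (Fin d) ℝ) - 1) *
        ((Q⁻¹ : GL (Fin d) ℝ) : Matrix (Fin d) (Fin d) ℝ) *
        ((H : GL (Fin d) ℝ) : Matrix (Fin d) (Fin d) ℝ) := by
  have h := conj_sub_one (Q⁻¹) E H
  rwa [inv_inv] at h

variable {M : Type*} [MetricSpace M] {d : ℕ}

lemma localStable_iterate (g : Equiv.Perm M) (ε : ℝ) {x w : M}
    (h : w ∈ localStable g ε x) (k : ℕ) :
    (g ^ k) w ∈ localStable g ε ((g ^ k) x) := by
  intro n
  have h1 : ∀ (v : M), (g ^ n) ((g ^ k) v) = (g ^ (n + k)) v := by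
    intro v; rw [pow_add]; rfl
  rw [h1, h1]
  exact h (n + k)

lemma exists_dist_bound (g : Equiv.Perm M) (ε C lam : ℝ) (hC : 0 < C)
    (contr : ∀ x y₁ y₂ : M, y₁ ∈ localStable g ε x → y₂ ∈ localStable g ε x → ∀ n : ℕ,
      dist ((g ^ n) y₁) ((g ^ n) y₂) ≤ C * Real.exp (-lam * n) * dist y₁ y₂)
    {x y z : M} (hy : ∃ m : ℕ, (g ^ m) y ∈ localStable g ε ((g ^ m) x))
    (hz : ∃ m : ℕ, (g ^ m) z ∈ localStable g ε ((g ^ m) x)) :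
    ∃ D : ℝ, 0 ≤ D ∧ ∀ n : ℕ, dist ((g ^ n) y) ((g ^ n) z) ≤ D * Real.exp (-lam * n) := by
  obtain ⟨m₁, h₁⟩ := hy
  obtain ⟨m₂, h₂⟩ := hz
  set m := max m₁ m₂ with hm
  have hy' : (g ^ m) y ∈ localStable g ε ((g ^ m) x) := by
    have := localStable_iterate g ε h₁ (m - m₁)
    have he : ∀ v : M, (g ^ (m - m₁)) ((g ^ m₁) v) = (g ^ m) v := by
      intro v
      rw [← Equiv.Perm.mul_apply, ← pow_add, Nat.sub_add_cancel (le_max_left m₁ m₂)]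
    rwa [he, he] at this
  have hz' : (g ^ m) z ∈ localStable g ε ((g ^ m) x) := by
    have := localStable_iterate g ε h₂ (m - m₂)
    have he : ∀ v : M, (g ^ (m - m₂)) ((g ^ m₂) v) = (g ^ m) v := by
      intro v
      rw [← Equiv.Perm.mul_apply, ← pow_add, Nat.sub_add_cancel (le_max_right m₁ m₂)]
    rwa [he, he] at this
  set dm := dist ((g ^ m) y) ((g ^ m) z) with hdm
  set D := C * dm * Real.exp (lam * m) +
    ∑ k ∈ Finset.range m, dist ((g ^ k) y) ((g ^ k) z) * Real.exp (lam * k) with hD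
  have hsum_nonneg : (0:ℝ) ≤
      ∑ k ∈ Finset.range m, dist ((g ^ k) y) ((g ^ k) z) * Real.exp (lam * k) :=
    Finset.sum_nonneg fun k _ => mul_nonneg dist_nonneg (Real.exp_pos _).le
  have hD0 : 0 ≤ D := by
    have : 0 ≤ C * dm * Real.exp (lam * m) := by positivity
    linarith
  refine ⟨D, hD0, fun n => ?_⟩
  rcases le_or_gt m n with hmn | hmn
  · have key := contr ((g ^ m) x) ((g ^ m) y) ((g ^ m) z) hy' hz' (n - m)
    have he : ∀ v : M, (g ^ (n - m)) ((g ^ m) v) = (g ^ n) v := by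
      intro v
      rw [← Equiv.Perm.mul_apply, ← pow_add, Nat.sub_add_cancel hmn]
    rw [he, he] at key
    have hcast : ((n - m : ℕ) : ℝ) = (n : ℝ) - (m : ℝ) := by
      rw [Nat.cast_sub hmn]
    rw [hcast] at key
    have hexp : Real.exp (-lam * ((n:ℝ) - (m:ℝ))) = Real.exp (lam * m) * Real.exp (-lam * n) := by
      rw [← Real.exp_add]; ring_nf
    calc dist ((g ^ n) y) ((g ^ n) z) ≤ C * Real.exp (-lam * ((n:ℝ) - m)) * dm := key
      _ = C * dm * Real.exp (lam * m) * Real.exp (-lam * n) := by rw [hexp]; ring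
      _ ≤ D * Real.exp (-lam * n) := by
          apply mul_le_mul_of_nonneg_right _ (Real.exp_pos _).le
          rw [hD]; linarith
  · have hterm : dist ((g ^ n) y) ((g ^ n) z) * Real.exp (lam * n) ≤
        ∑ k ∈ Finset.range m, dist ((g ^ k) y) ((g ^ k) z) * Real.exp (lam * k) := by
      apply Finset.single_le_sum
        (f := fun k : ℕ => dist ((g ^ k) y) ((g ^ k) z) * Real.exp (lam * (k:ℝ)))
        (fun k _ => mul_nonneg dist_nonneg (Real.exp_pos _).le) (Finset.mem_range.2 hmn)
    have hD_ge : dist ((g ^ n) y) ((g ^ n) z) * Real.exp (lam * n) ≤ D := by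
      have : 0 ≤ C * dm * Real.exp (lam * m) := by positivity
      rw [hD]; linarith
    have := mul_le_mul_of_nonneg_right hD_ge (Real.exp_pos (-lam * n)).le
    calc dist ((g ^ n) y) ((g ^ n) z)
        = dist ((g ^ n) y) ((g ^ n) z) * Real.exp (lam * n) * Real.exp (-lam * n) := by
          rw [mul_assoc, ← Real.exp_add]; ring_nf; rw [Real.exp_zero, mul_one]
      _ ≤ D * Real.exp (-lam * n) := this

lemma holder_continuous_norm {ν CA : ℝ} (hν : 0 < ν) (hCA : 0 < CA)
    (A : M → GL (Fin d) ℝ)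
    (hA : ∀ x y : M, ‖(A x : Matrix (Fin d) (Fin d) ℝ) - (A y : Matrix (Fin d) (Fin d) ℝ)‖ ≤
      CA * dist x y ^ ν) :
    Continuous fun w => ‖(A w : Matrix (Fin d) (Fin d) ℝ)‖ := by
  rw [Metric.continuous_iff]
  intro w₀ r hr
  refine ⟨(r / (CA + 1)) ^ (1/ν), Real.rpow_pos_of_pos (by positivity) _, fun w hw => ?_⟩
  have h1 : dist ‖(A w : Matrix (Fin d) (Fin d) ℝ)‖ ‖(A w₀ : Matrix (Fin d) (Fin d) ℝ)‖ ≤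
      ‖(A w : Matrix (Fin d) (Fin d) ℝ) - (A w₀ : Matrix (Fin d) (Fin d) ℝ)‖ := by
    rw [Real.dist_eq]; exact abs_norm_sub_norm_le _ _
  have h3 : dist w w₀ ^ ν ≤ ((r / (CA + 1)) ^ (1/ν)) ^ ν :=
    Real.rpow_le_rpow dist_nonneg hw.le hν.le
  have h4 : ((r / (CA + 1)) ^ (1/ν)) ^ ν = r / (CA + 1) := by
    rw [← Real.rpow_mul (by positivity), one_div, inv_mul_cancel₀ hν.ne', Real.rpow_one]
  have h5 : CA * dist w w₀ ^ ν ≤ CA * (r / (CA + 1)) := by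
    rw [← h4]; exact mul_le_mul_of_nonneg_left h3 hCA.le
  have h6 : CA * (r / (CA + 1)) < r := by
    rw [div_eq_mul_inv]
    have : CA / (CA + 1) < 1 := by
      rw [div_lt_one (by positivity)]; linarith
    calc CA * (r * (CA+1)⁻¹) = (CA / (CA+1)) * r := by ring
      _ < 1 * r := mul_lt_mul_of_pos_right this hr
      _ = r := one_mul r
  calc dist ‖(A w : Matrix (Fin d) (Fin d) ℝ)‖ ‖(A w₀ : Matrix (Fin d) (Fin d) ℝ)‖
      ≤ CA * dist w w₀ ^ ν := h1.trans (hA w w₀)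
    _ < r := lt_of_le_of_lt h5 h6

lemma exists_inv_bound [CompactSpace M] (hd : 0 < d) (x₀ : M)
    (A : M → GL (Fin d) ℝ) (α : MulAut (GL (Fin d) ℝ))
    {ν CA : ℝ} (hν : 0 < ν) (hCA : 0 < CA)
    (hA : ∀ x y : M, ‖(A x : Matrix (Fin d) (Fin d) ℝ) - (A y : Matrix (Fin d) (Fin d) ℝ)‖ ≤
      CA * dist x y ^ ν)
    {Cb ρ θ : ℝ} (hCb : 0 < Cb)
    (hb1 : ∀ x : M, ‖(((α ^ (-(1:ℤ))) (A x) : GL (Fin d) ℝ) : Matrix (Fin d) (Fin d) ℝ)‖ *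
      ‖(((α ^ (-(1:ℤ))) ((A x)⁻¹) : GL (Fin d) ℝ) : Matrix (Fin d) (Fin d) ℝ)‖ <
        Cb * Real.exp θ)
    (hb3 : ∀ (T : GL (Fin d) ℝ),
      ‖(((α ^ (1:ℤ)) T : GL (Fin d) ℝ) : Matrix (Fin d) (Fin d) ℝ)‖ ≤
        Cb * Real.exp ρ * ‖(T : Matrix (Fin d) (Fin d) ℝ)‖) :
    ∃ K : ℝ, 0 ≤ K ∧ ∀ w : M, ‖(((A w)⁻¹ : GL (Fin d) ℝ) : Matrix (Fin d) (Fin d) ℝ)‖ ≤ K := by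
  have hF : Continuous fun w => ‖(A w : Matrix (Fin d) (Fin d) ℝ)‖ :=
    holder_continuous_norm hν hCA A hA
  obtain ⟨w₀, -, hw₀⟩ := isCompact_univ.exists_isMinOn ⟨x₀, trivial⟩ hF.continuousOn
  set m₀ := ‖(A w₀ : Matrix (Fin d) (Fin d) ℝ)‖ with hm₀
  have hmin : ∀ w : M, m₀ ≤ ‖(A w : Matrix (Fin d) (Fin d) ℝ)‖ := fun w => hw₀ (Set.mem_univ w)
  have hm₀pos : 0 < m₀ := by
    rw [hm₀, norm_pos_iff]
    intro h0
    have h1 : ((A w₀ * (A w₀)⁻¹ : GL (Fin d) ℝ) : Matrix (Fin d) (Fin d) ℝ) =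
        (A w₀ : Matrix (Fin d) (Fin d) ℝ) * ((A w₀)⁻¹ : GL (Fin d) ℝ) := rfl
    rw [mul_inv_cancel, h0, zero_mul] at h1
    have h2 : ((1 : GL (Fin d) ℝ) : Matrix (Fin d) (Fin d) ℝ) = 1 := rfl
    rw [h2] at h1
    have h3 := congrFun (congrFun h1 ⟨0, hd⟩) ⟨0, hd⟩
    rw [Matrix.one_apply_eq] at h3
    simp at h3
  refine ⟨Cb * Real.exp ρ * (Cb * Real.exp θ * (Cb * Real.exp ρ) / m₀), by positivity, fun w => ?_⟩
  set a := ‖(((α ^ (-(1:ℤ))) (A w) : GL (Fin d) ℝ) : Matrix (Fin d) (Fin d) ℝ)‖ with ha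
  set b := ‖(((α ^ (-(1:ℤ))) ((A w)⁻¹) : GL (Fin d) ℝ) : Matrix (Fin d) (Fin d) ℝ)‖ with hb
  have h1 : a * b < Cb * Real.exp θ := hb1 w
  have hid : ∀ u : GL (Fin d) ℝ, (α ^ (1:ℤ)) ((α ^ (-(1:ℤ))) u) = u := by
    intro u
    have h : (α ^ (1:ℤ)) ((α ^ (-(1:ℤ))) u) = (α ^ ((1:ℤ) + -1)) u := by rw [zpow_add]; rfl
    simpa using h
  have h2 : ‖(A w : Matrix (Fin d) (Fin d) ℝ)‖ ≤ Cb * Real.exp ρ * a := by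
    have h := hb3 ((α ^ (-(1:ℤ))) (A w))
    rwa [hid] at h
  have h3 : ‖(((A w)⁻¹ : GL (Fin d) ℝ) : Matrix (Fin d) (Fin d) ℝ)‖ ≤ Cb * Real.exp ρ * b := by
    have h := hb3 ((α ^ (-(1:ℤ))) ((A w)⁻¹))
    rwa [hid] at h
  have ha0 : 0 ≤ a := norm_nonneg _
  have hb0 : 0 ≤ b := norm_nonneg _
  have hminw := hmin w
  have key : b * m₀ ≤ Cb * Real.exp ρ * (Cb * Real.exp θ) := by
    have h4 : b * m₀ ≤ b * (Cb * Real.exp ρ * a) :=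
      mul_le_mul_of_nonneg_left (hminw.trans h2) hb0
    have h5 : b * (Cb * Real.exp ρ * a) = Cb * Real.exp ρ * (a * b) := by ring
    have h6 : Cb * Real.exp ρ * (a * b) ≤ Cb * Real.exp ρ * (Cb * Real.exp θ) :=
      mul_le_mul_of_nonneg_left h1.le (by positivity)
    linarith
  have hb_le : b ≤ Cb * Real.exp θ * (Cb * Real.exp ρ) / m₀ := by
    rw [le_div_iff₀ hm₀pos]
    linarith
  calc ‖(((A w)⁻¹ : GL (Fin d) ℝ) : Matrix (Fin d) (Fin d) ℝ)‖ ≤ Cb * Real.exp ρ * b := h3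
    _ ≤ Cb * Real.exp ρ * (Cb * Real.exp θ * (Cb * Real.exp ρ) / m₀) :=
        mul_le_mul_of_nonneg_left hb_le (by positivity)


theorem stable_conv (f : Equiv.Perm M) (α : MulAut (GL (Fin d) ℝ)) (A : M → GL (Fin d) ℝ)
    {ν lam CA KA Cb ρ θ D : ℝ}
    (hν : 0 < ν) (hCA : 0 < CA) (hKA : 0 ≤ KA) (hCb : 0 < Cb)
    (hgap : ρ + θ < ν * lam) (hD : 0 ≤ D)
    (hA : ∀ x y : M, ‖(A x : Matrix (Fin d) (Fin d) ℝ) - (A y : Matrix (Fin d) (Fin d) ℝ)‖ ≤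
      CA * dist x y ^ ν)
    (hKAb : ∀ w : M, ‖(((A w)⁻¹ : GL (Fin d) ℝ) : Matrix (Fin d) (Fin d) ℝ)‖ ≤ KA)
    (hb1 : ∀ (n : ℤ) (x : M),
      ‖(((α ^ (-n)) (twc f α A n x) : GL (Fin d) ℝ) : Matrix (Fin d) (Fin d) ℝ)‖ *
        ‖(((α ^ (-n)) ((twc f α A n x)⁻¹) : GL (Fin d) ℝ) : Matrix (Fin d) (Fin d) ℝ)‖ <
        Cb * Real.exp (θ * |(n : ℝ)|))
    (hb2 : ∀ (n : ℤ) (T₁ T₂ : GL (Fin d) ℝ),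
      ‖(((α ^ n) T₁ : GL (Fin d) ℝ) : Matrix (Fin d) (Fin d) ℝ) -
          (((α ^ n) T₂ : GL (Fin d) ℝ) : Matrix (Fin d) (Fin d) ℝ)‖ ≤
        Cb * Real.exp (ρ * |(n : ℝ)|) *
          ‖(T₁ : Matrix (Fin d) (Fin d) ℝ) - (T₂ : Matrix (Fin d) (Fin d) ℝ)‖)
    {y z : M} (hdist : ∀ n : ℕ, dist ((f ^ n) y) ((f ^ n) z) ≤ D * Real.exp (-lam * n)) :
    ∃ L, Filter.Tendsto
      (fun n : ℕ => ((stableH f α A y z n : GL (Fin d) ℝ) : Matrix (Fin d) (Fin d) ℝ))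
      Filter.atTop (nhds L) := by
  set c : ℝ := Cb ^ 2 * Real.exp ρ * (KA * CA * D ^ ν) with hc
  set q : ℝ := Real.exp (θ + ρ - ν * lam) with hq
  have hc0 : 0 ≤ c := by positivity
  have hq0 : 0 ≤ q := (Real.exp_pos _).le
  have hq1 : q < 1 := by
    rw [hq, Real.exp_lt_one_iff]; linarith
  apply tendsto_of_ratio _ c q hc0 hq0 hq1
  intro n
  have hdiff : ((stableH f α A y z (n+1) : GL (Fin d) ℝ) : Matrix (Fin d) (Fin d) ℝ) -
      ((stableH f α A y z n : GL (Fin d) ℝ) : Matrix (Fin d) (Fin d) ℝ)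
      = (((stableP f α A z n)⁻¹ : GL (Fin d) ℝ) : Matrix (Fin d) (Fin d) ℝ) *
        (((stableE f α A y z n : GL (Fin d) ℝ) : Matrix (Fin d) (Fin d) ℝ) - 1) *
        ((stableP f α A z n : GL (Fin d) ℝ) : Matrix (Fin d) (Fin d) ℝ) *
        ((stableH f α A y z n : GL (Fin d) ℝ) : Matrix (Fin d) (Fin d) ℝ) := by
    rw [stableH_succ]; exact conj_sub_one _ _ _
  rw [hdiff]
  -- bound ‖E - 1‖
  have hrpow : (D * Real.exp (-lam * n)) ^ ν = D ^ ν * Real.exp ((-(ν * lam)) * n) := by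
    rw [Real.mul_rpow hD (Real.exp_pos _).le]
    congr 1
    rw [Real.rpow_def_of_pos (Real.exp_pos _), Real.log_exp]
    congr 1; ring
  have hinner : ‖(((A ((f ^ n) z))⁻¹ * A ((f ^ n) y) : GL (Fin d) ℝ) : Matrix (Fin d) (Fin d) ℝ)
      - ((1 : GL (Fin d) ℝ) : Matrix (Fin d) (Fin d) ℝ)‖ ≤
      KA * CA * D ^ ν * Real.exp ((-(ν * lam)) * n) := by
    have h2 : (((A ((f ^ n) z))⁻¹ * A ((f ^ n) y) : GL (Fin d) ℝ) : Matrix (Fin d) (Fin d) ℝ)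
        - ((1 : GL (Fin d) ℝ) : Matrix (Fin d) (Fin d) ℝ)
        = (((A ((f ^ n) z))⁻¹ : GL (Fin d) ℝ) : Matrix (Fin d) (Fin d) ℝ) *
          ((A ((f ^ n) y) : Matrix (Fin d) (Fin d) ℝ) - (A ((f ^ n) z) : Matrix (Fin d) (Fin d) ℝ)) := by
      rw [mul_sub, show (((A ((f ^ n) z))⁻¹ : GL (Fin d) ℝ) : Matrix (Fin d) (Fin d) ℝ) *
          (A ((f ^ n) z) : Matrix (Fin d) (Fin d) ℝ) = 1 from (A ((f ^ n) z)).inv_mul,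
          Units.val_one]
      rfl
    rw [h2]
    calc ‖_ * _‖ ≤ ‖(((A ((f ^ n) z))⁻¹ : GL (Fin d) ℝ) : Matrix (Fin d) (Fin d) ℝ)‖ *
        ‖(A ((f ^ n) y) : Matrix (Fin d) (Fin d) ℝ) - (A ((f ^ n) z) : Matrix (Fin d) (Fin d) ℝ)‖ :=
          norm_mul_le _ _
      _ ≤ KA * (CA * (D ^ ν * Real.exp ((-(ν * lam)) * n))) := by
          apply mul_le_mul (hKAb _) _ (norm_nonneg _) hKA
          calc ‖(A ((f ^ n) y) : Matrix (Fin d) (Fin d) ℝ) - (A ((f ^ n) z) : Matrix (Fin d) (Fin d) ℝ)‖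
              ≤ CA * dist ((f ^ n) y) ((f ^ n) z) ^ ν := hA _ _
            _ ≤ CA * (D ^ ν * Real.exp ((-(ν * lam)) * n)) := by
                rw [← hrpow]
                exact mul_le_mul_of_nonneg_left
                  (Real.rpow_le_rpow dist_nonneg (hdist n) hν.le) hCA.le
      _ = KA * CA * D ^ ν * Real.exp ((-(ν * lam)) * n) := by ring
  have hEbound : ‖((stableE f α A y z n : GL (Fin d) ℝ) : Matrix (Fin d) (Fin d) ℝ) - 1‖ ≤
      Cb * Real.exp ρ * (KA * CA * D ^ ν) * Real.exp ((ρ - ν * lam) * n) := by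
    have h1 := hb2 (-((n+1:ℕ):ℤ)) ((A ((f ^ n) z))⁻¹ * A ((f ^ n) y)) 1
    have habs : |(((-((n+1:ℕ):ℤ)) : ℤ) : ℝ)| = (n:ℝ) + 1 := by
      push_cast
      rw [abs_neg, abs_of_nonneg (by positivity : (0:ℝ) ≤ (n:ℝ) + 1)]
    rw [map_one, Units.val_one, habs] at h1
    have h1' : ‖((stableE f α A y z n : GL (Fin d) ℝ) : Matrix (Fin d) (Fin d) ℝ) - 1‖ ≤
        Cb * Real.exp (ρ * ((n:ℝ) + 1)) *
          ‖(((A ((f ^ n) z))⁻¹ * A ((f ^ n) y) : GL (Fin d) ℝ) : Matrix (Fin d) (Fin d) ℝ)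
            - ((1 : GL (Fin d) ℝ) : Matrix (Fin d) (Fin d) ℝ)‖ := by
      rw [Units.val_one]
      exact h1
    calc ‖((stableE f α A y z n : GL (Fin d) ℝ) : Matrix (Fin d) (Fin d) ℝ) - 1‖
        ≤ Cb * Real.exp (ρ * ((n:ℝ) + 1)) * (KA * CA * D ^ ν * Real.exp ((-(ν * lam)) * n)) := by
          refine h1'.trans (mul_le_mul_of_nonneg_left hinner (by positivity))
      _ = Cb * Real.exp ρ * (KA * CA * D ^ ν) * Real.exp ((ρ - ν * lam) * n) := by
          rw [show ρ * ((n:ℝ) + 1) = ρ + ρ * n by ring, Real.exp_add,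
            show (ρ - ν * lam) * (n:ℝ) = ρ * n + (-(ν * lam)) * n by ring, Real.exp_add]
          ring
  -- bound ‖P‖ * ‖P⁻¹‖
  have hPbound : ‖((stableP f α A z n : GL (Fin d) ℝ) : Matrix (Fin d) (Fin d) ℝ)‖ *
      ‖(((stableP f α A z n)⁻¹ : GL (Fin d) ℝ) : Matrix (Fin d) (Fin d) ℝ)‖ ≤
      Cb * Real.exp (θ * n) := by
    have h1 := hb1 (n:ℤ) z
    have habs' : |(((n:ℤ)) : ℝ)| = (n:ℝ) := by
      push_cast; exact abs_of_nonneg (by positivity)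
    rw [habs'] at h1
    rw [stableP, ← map_inv (α ^ (-(n:ℤ))) (twc f α A (n:ℤ) z)]
    exact h1.le
  -- put it together
  calc ‖_ * _ * _ * ((stableH f α A y z n : GL (Fin d) ℝ) : Matrix (Fin d) (Fin d) ℝ)‖
      ≤ ‖(((stableP f α A z n)⁻¹ : GL (Fin d) ℝ) : Matrix (Fin d) (Fin d) ℝ) *
          (((stableE f α A y z n : GL (Fin d) ℝ) : Matrix (Fin d) (Fin d) ℝ) - 1) *
          ((stableP f α A z n : GL (Fin d) ℝ) : Matrix (Fin d) (Fin d) ℝ)‖ *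
        ‖((stableH f α A y z n : GL (Fin d) ℝ) : Matrix (Fin d) (Fin d) ℝ)‖ := norm_mul_le _ _
    _ ≤ (c * q ^ n) * ‖((stableH f α A y z n : GL (Fin d) ℝ) : Matrix (Fin d) (Fin d) ℝ)‖ := by
        apply mul_le_mul_of_nonneg_right _ (norm_nonneg _)
        calc ‖_ * _ * _‖
            ≤ ‖(((stableP f α A z n)⁻¹ : GL (Fin d) ℝ) : Matrix (Fin d) (Fin d) ℝ) *
                (((stableE f α A y z n : GL (Fin d) ℝ) : Matrix (Fin d) (Fin d) ℝ) - 1)‖ *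
              ‖((stableP f α A z n : GL (Fin d) ℝ) : Matrix (Fin d) (Fin d) ℝ)‖ := norm_mul_le _ _
          _ ≤ ‖(((stableP f α A z n)⁻¹ : GL (Fin d) ℝ) : Matrix (Fin d) (Fin d) ℝ)‖ *
              ‖((stableE f α A y z n : GL (Fin d) ℝ) : Matrix (Fin d) (Fin d) ℝ) - 1‖ *
              ‖((stableP f α A z n : GL (Fin d) ℝ) : Matrix (Fin d) (Fin d) ℝ)‖ := by
                apply mul_le_mul_of_nonneg_right (norm_mul_le _ _) (norm_nonneg _)
          _ = (‖((stableP f α A z n : GL (Fin d) ℝ) : Matrix (Fin d) (Fin d) ℝ)‖ *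
              ‖(((stableP f α A z n)⁻¹ : GL (Fin d) ℝ) : Matrix (Fin d) (Fin d) ℝ)‖) *
              ‖((stableE f α A y z n : GL (Fin d) ℝ) : Matrix (Fin d) (Fin d) ℝ) - 1‖ := by ring
          _ ≤ (Cb * Real.exp (θ * n)) *
              (Cb * Real.exp ρ * (KA * CA * D ^ ν) * Real.exp ((ρ - ν * lam) * n)) := by
                apply mul_le_mul hPbound hEbound (norm_nonneg _) (by positivity)
          _ = c * q ^ n := by
              rw [hc, hq, ← Real.exp_nat_mul,
                show (n:ℝ) * (θ + ρ - ν * lam) = θ * n + (ρ - ν * lam) * n by ring,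
                Real.exp_add]
              ring
    _ = c * q ^ n * ‖((stableH f α A y z n : GL (Fin d) ℝ) : Matrix (Fin d) (Fin d) ℝ)‖ := rfl

theorem unstable_conv (f : Equiv.Perm M) (α : MulAut (GL (Fin d) ℝ)) (A : M → GL (Fin d) ℝ)
    {ν lam CA KA Cb ρ θ D : ℝ}
    (hν : 0 < ν) (hCA : 0 < CA) (hKA : 0 ≤ KA) (hCb : 0 < Cb) (hρ : 0 < ρ) (hθ : 0 < θ)
    (hgap : 3 * ρ + θ < ν * lam) (hD : 0 ≤ D)
    (hA : ∀ x y : M, ‖(A x : Matrix (Fin d) (Fin d) ℝ) - (A y : Matrix (Fin d) (Fin d) ℝ)‖ ≤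
      CA * dist x y ^ ν)
    (hKAb : ∀ w : M, ‖(((A w)⁻¹ : GL (Fin d) ℝ) : Matrix (Fin d) (Fin d) ℝ)‖ ≤ KA)
    (hb1 : ∀ (n : ℤ) (x : M),
      ‖(((α ^ (-n)) (twc f α A n x) : GL (Fin d) ℝ) : Matrix (Fin d) (Fin d) ℝ)‖ *
        ‖(((α ^ (-n)) ((twc f α A n x)⁻¹) : GL (Fin d) ℝ) : Matrix (Fin d) (Fin d) ℝ)‖ <
        Cb * Real.exp (θ * |(n : ℝ)|))
    (hb2 : ∀ (n : ℤ) (T₁ T₂ : GL (Fin d) ℝ),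
      ‖(((α ^ n) T₁ : GL (Fin d) ℝ) : Matrix (Fin d) (Fin d) ℝ) -
          (((α ^ n) T₂ : GL (Fin d) ℝ) : Matrix (Fin d) (Fin d) ℝ)‖ ≤
        Cb * Real.exp (ρ * |(n : ℝ)|) *
          ‖(T₁ : Matrix (Fin d) (Fin d) ℝ) - (T₂ : Matrix (Fin d) (Fin d) ℝ)‖)
    (hb3 : ∀ (n : ℤ) (T : GL (Fin d) ℝ),
      ‖(((α ^ n) T : GL (Fin d) ℝ) : Matrix (Fin d) (Fin d) ℝ)‖ ≤
        Cb * Real.exp (ρ * |(n : ℝ)|) * ‖(T : Matrix (Fin d) (Fin d) ℝ)‖)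
    {y z : M} (hdist : ∀ n : ℕ, dist ((f⁻¹ ^ n) y) ((f⁻¹ ^ n) z) ≤ D * Real.exp (-lam * n)) :
    ∃ L, Filter.Tendsto
      (fun n : ℕ => ((unstH f α A y z n : GL (Fin d) ℝ) : Matrix (Fin d) (Fin d) ℝ))
      Filter.atTop (nhds L) := by
  have hnl : 0 < ν * lam := by linarith
  set c : ℝ := Cb ^ 4 * (KA * CA * D ^ ν) with hc
  set q : ℝ := Real.exp (3 * ρ + θ - ν * lam) with hq
  have hc0 : 0 ≤ c := by positivity
  have hq0 : 0 ≤ q := (Real.exp_pos _).le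
  have hq1 : q < 1 := by rw [hq, Real.exp_lt_one_iff]; linarith
  apply tendsto_of_ratio _ c q hc0 hq0 hq1
  intro n
  have habs : |(((n:ℤ)) : ℝ)| = (n:ℝ) := by push_cast; exact abs_of_nonneg (by positivity)
  -- helper: norm of u bounded via α^{-n} u
  have hback : ∀ u : GL (Fin d) ℝ, ‖(u : Matrix (Fin d) (Fin d) ℝ)‖ ≤
      Cb * Real.exp (ρ * n) * ‖(((α ^ (-(n:ℤ))) u : GL (Fin d) ℝ) : Matrix (Fin d) (Fin d) ℝ)‖ := by
    intro u
    have h := hb3 (n:ℤ) ((α ^ (-(n:ℤ))) u)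
    rw [habs] at h
    rw [zpow_apply_zpow, add_neg_cancel] at h
    simpa using h
  have hdiff : ((unstH f α A y z (n+1) : GL (Fin d) ℝ) : Matrix (Fin d) (Fin d) ℝ) -
      ((unstH f α A y z n : GL (Fin d) ℝ) : Matrix (Fin d) (Fin d) ℝ)
      = ((unstQ f α A z n : GL (Fin d) ℝ) : Matrix (Fin d) (Fin d) ℝ) *
        (((unstE f α A y z n : GL (Fin d) ℝ) : Matrix (Fin d) (Fin d) ℝ) - 1) *
        (((unstQ f α A z n)⁻¹ : GL (Fin d) ℝ) : Matrix (Fin d) (Fin d) ℝ) *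
        ((unstH f α A y z n : GL (Fin d) ℝ) : Matrix (Fin d) (Fin d) ℝ) := by
    rw [unstH_succ]; exact conj_sub_one' _ _ _
  rw [hdiff]
  -- bound on Q
  have hQ : ‖((unstQ f α A z n : GL (Fin d) ℝ) : Matrix (Fin d) (Fin d) ℝ)‖ *
      ‖(((unstQ f α A z n)⁻¹ : GL (Fin d) ℝ) : Matrix (Fin d) (Fin d) ℝ)‖ ≤
      Cb ^ 3 * Real.exp ((2 * ρ + θ) * n) := by
    have hQ1 := hback (unstQ f α A z n)
    have hQ2 := hback ((unstQ f α A z n)⁻¹)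
    have hb1' := hb1 (n:ℤ) ((f⁻¹ ^ n) z)
    rw [habs, twc_coe] at hb1'
    have e1 : (α ^ (-(n:ℤ))) ((twcN f α A n ((f⁻¹ ^ n) z))⁻¹) =
        (α ^ (-(n:ℤ))) ((unstQ f α A z n)⁻¹) := rfl
    rw [e1] at hb1'
    have hn1 : 0 ≤ ‖(((α ^ (-(n:ℤ))) (unstQ f α A z n) : GL (Fin d) ℝ) : Matrix (Fin d) (Fin d) ℝ)‖ := norm_nonneg _
    have hn2 : 0 ≤ ‖(((α ^ (-(n:ℤ))) ((unstQ f α A z n)⁻¹) : GL (Fin d) ℝ) : Matrix (Fin d) (Fin d) ℝ)‖ := norm_nonneg _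
    calc ‖((unstQ f α A z n : GL (Fin d) ℝ) : Matrix (Fin d) (Fin d) ℝ)‖ *
        ‖(((unstQ f α A z n)⁻¹ : GL (Fin d) ℝ) : Matrix (Fin d) (Fin d) ℝ)‖
        ≤ (Cb * Real.exp (ρ * n) * ‖(((α ^ (-(n:ℤ))) (unstQ f α A z n) : GL (Fin d) ℝ) : Matrix (Fin d) (Fin d) ℝ)‖) *
          (Cb * Real.exp (ρ * n) * ‖(((α ^ (-(n:ℤ))) ((unstQ f α A z n)⁻¹) : GL (Fin d) ℝ) : Matrix (Fin d) (Fin d) ℝ)‖) :=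
          mul_le_mul hQ1 hQ2 (norm_nonneg _) (by positivity)
      _ = (Cb * Real.exp (ρ * n)) ^ 2 *
          (‖(((α ^ (-(n:ℤ))) (unstQ f α A z n) : GL (Fin d) ℝ) : Matrix (Fin d) (Fin d) ℝ)‖ *
           ‖(((α ^ (-(n:ℤ))) ((unstQ f α A z n)⁻¹) : GL (Fin d) ℝ) : Matrix (Fin d) (Fin d) ℝ)‖) := by ring
      _ ≤ (Cb * Real.exp (ρ * n)) ^ 2 * (Cb * Real.exp (θ * n)) := by
          apply mul_le_mul_of_nonneg_left hb1'.le (by positivity)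
      _ = Cb ^ 3 * Real.exp ((2 * ρ + θ) * n) := by
          rw [show (2 * ρ + θ) * (n:ℝ) = (ρ * n + ρ * n) + θ * n by ring, Real.exp_add, Real.exp_add]
          ring
  -- bound on E - 1
  have hE : ‖((unstE f α A y z n : GL (Fin d) ℝ) : Matrix (Fin d) (Fin d) ℝ) - 1‖ ≤
      Cb * (KA * CA * D ^ ν) * Real.exp ((ρ - ν * lam) * n) := by
    have h1 := hb2 (n:ℤ) (A ((f⁻¹ ^ (n+1)) z) * (A ((f⁻¹ ^ (n+1)) y))⁻¹) 1
    rw [map_one, Units.val_one, habs] at h1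
    have hzc : (α ^ ((n:ℕ):ℤ)) (A ((f⁻¹ ^ (n+1)) z) * (A ((f⁻¹ ^ (n+1)) y))⁻¹) =
        unstE f α A y z n := by
      rw [unstE, zpow_natCast]
    rw [hzc] at h1
    have hinner : ‖((A ((f⁻¹ ^ (n+1)) z) * (A ((f⁻¹ ^ (n+1)) y))⁻¹ : GL (Fin d) ℝ) :
          Matrix (Fin d) (Fin d) ℝ) - ((1 : GL (Fin d) ℝ) : Matrix (Fin d) (Fin d) ℝ)‖ ≤
        KA * CA * D ^ ν * Real.exp ((-(ν * lam)) * n) := by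
      have h2 : ((A ((f⁻¹ ^ (n+1)) z) * (A ((f⁻¹ ^ (n+1)) y))⁻¹ : GL (Fin d) ℝ) :
            Matrix (Fin d) (Fin d) ℝ) - ((1 : GL (Fin d) ℝ) : Matrix (Fin d) (Fin d) ℝ)
          = ((A ((f⁻¹ ^ (n+1)) z) : Matrix (Fin d) (Fin d) ℝ) -
             (A ((f⁻¹ ^ (n+1)) y) : Matrix (Fin d) (Fin d) ℝ)) *
            (((A ((f⁻¹ ^ (n+1)) y))⁻¹ : GL (Fin d) ℝ) : Matrix (Fin d) (Fin d) ℝ) := by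
        rw [sub_mul, show (A ((f⁻¹ ^ (n+1)) y) : Matrix (Fin d) (Fin d) ℝ) *
            (((A ((f⁻¹ ^ (n+1)) y))⁻¹ : GL (Fin d) ℝ) : Matrix (Fin d) (Fin d) ℝ) = 1 from
            (A ((f⁻¹ ^ (n+1)) y)).mul_inv, Units.val_one]
        rfl
      rw [h2]
      have hd1 : dist ((f⁻¹ ^ (n+1)) z) ((f⁻¹ ^ (n+1)) y) ≤ D * Real.exp (-lam * (n+1:ℕ)) := by
        rw [dist_comm]; exact hdist (n+1)
      have hrpow : (D * Real.exp (-lam * (n+1:ℕ))) ^ ν =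
          D ^ ν * Real.exp ((-(ν * lam)) * ((n:ℝ)+1)) := by
        rw [Real.mul_rpow hD (Real.exp_pos _).le]
        congr 1
        rw [Real.rpow_def_of_pos (Real.exp_pos _), Real.log_exp]
        push_cast
        congr 1; ring
      calc ‖_ * _‖ ≤ ‖(A ((f⁻¹ ^ (n+1)) z) : Matrix (Fin d) (Fin d) ℝ) -
            (A ((f⁻¹ ^ (n+1)) y) : Matrix (Fin d) (Fin d) ℝ)‖ *
          ‖(((A ((f⁻¹ ^ (n+1)) y))⁻¹ : GL (Fin d) ℝ) : Matrix (Fin d) (Fin d) ℝ)‖ := norm_mul_le _ _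
        _ ≤ (CA * (D ^ ν * Real.exp ((-(ν * lam)) * ((n:ℝ)+1)))) * KA := by
            apply mul_le_mul _ (hKAb _) (norm_nonneg _) (by positivity)
            calc ‖(A ((f⁻¹ ^ (n+1)) z) : Matrix (Fin d) (Fin d) ℝ) -
                (A ((f⁻¹ ^ (n+1)) y) : Matrix (Fin d) (Fin d) ℝ)‖
                ≤ CA * dist ((f⁻¹ ^ (n+1)) z) ((f⁻¹ ^ (n+1)) y) ^ ν := hA _ _
              _ ≤ CA * (D ^ ν * Real.exp ((-(ν * lam)) * ((n:ℝ)+1))) := by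
                  rw [← hrpow]
                  exact mul_le_mul_of_nonneg_left
                    (Real.rpow_le_rpow dist_nonneg hd1 hν.le) hCA.le
        _ = KA * CA * D ^ ν * Real.exp ((-(ν * lam)) * ((n:ℝ)+1)) := by ring
        _ ≤ KA * CA * D ^ ν * Real.exp ((-(ν * lam)) * n) := by
            apply mul_le_mul_of_nonneg_left _ (by positivity)
            apply Real.exp_le_exp.2
            nlinarith
    calc ‖((unstE f α A y z n : GL (Fin d) ℝ) : Matrix (Fin d) (Fin d) ℝ) - 1‖
        ≤ Cb * Real.exp (ρ * n) * (KA * CA * D ^ ν * Real.exp ((-(ν * lam)) * n)) := by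
          rw [Units.val_one] at hinner
          exact h1.trans (mul_le_mul_of_nonneg_left hinner (by positivity))
      _ = Cb * (KA * CA * D ^ ν) * Real.exp ((ρ - ν * lam) * n) := by
          rw [show (ρ - ν * lam) * (n:ℝ) = ρ * n + (-(ν * lam)) * n by ring, Real.exp_add]
          ring
  -- combine
  calc ‖_ * _ * _ * ((unstH f α A y z n : GL (Fin d) ℝ) : Matrix (Fin d) (Fin d) ℝ)‖
      ≤ ‖((unstQ f α A z n : GL (Fin d) ℝ) : Matrix (Fin d) (Fin d) ℝ) *
          (((unstE f α A y z n : GL (Fin d) ℝ) : Matrix (Fin d) (Fin d) ℝ) - 1) *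
          (((unstQ f α A z n)⁻¹ : GL (Fin d) ℝ) : Matrix (Fin d) (Fin d) ℝ)‖ *
        ‖((unstH f α A y z n : GL (Fin d) ℝ) : Matrix (Fin d) (Fin d) ℝ)‖ := norm_mul_le _ _
    _ ≤ (c * q ^ n) * ‖((unstH f α A y z n : GL (Fin d) ℝ) : Matrix (Fin d) (Fin d) ℝ)‖ := by
        apply mul_le_mul_of_nonneg_right _ (norm_nonneg _)
        calc ‖_ * _ * _‖
            ≤ ‖((unstQ f α A z n : GL (Fin d) ℝ) : Matrix (Fin d) (Fin d) ℝ) *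
                (((unstE f α A y z n : GL (Fin d) ℝ) : Matrix (Fin d) (Fin d) ℝ) - 1)‖ *
              ‖(((unstQ f α A z n)⁻¹ : GL (Fin d) ℝ) : Matrix (Fin d) (Fin d) ℝ)‖ := norm_mul_le _ _
          _ ≤ ‖((unstQ f α A z n : GL (Fin d) ℝ) : Matrix (Fin d) (Fin d) ℝ)‖ *
              ‖((unstE f α A y z n : GL (Fin d) ℝ) : Matrix (Fin d) (Fin d) ℝ) - 1‖ *
              ‖(((unstQ f α A z n)⁻¹ : GL (Fin d) ℝ) : Matrix (Fin d) (Fin d) ℝ)‖ := by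
                apply mul_le_mul_of_nonneg_right (norm_mul_le _ _) (norm_nonneg _)
          _ = (‖((unstQ f α A z n : GL (Fin d) ℝ) : Matrix (Fin d) (Fin d) ℝ)‖ *
              ‖(((unstQ f α A z n)⁻¹ : GL (Fin d) ℝ) : Matrix (Fin d) (Fin d) ℝ)‖) *
              ‖((unstE f α A y z n : GL (Fin d) ℝ) : Matrix (Fin d) (Fin d) ℝ) - 1‖ := by ring
          _ ≤ (Cb ^ 3 * Real.exp ((2 * ρ + θ) * n)) *
              (Cb * (KA * CA * D ^ ν) * Real.exp ((ρ - ν * lam) * n)) := by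
                apply mul_le_mul hQ hE (norm_nonneg _) (by positivity)
          _ = c * q ^ n := by
              rw [hc, hq, ← Real.exp_nat_mul,
                show (n:ℝ) * (3 * ρ + θ - ν * lam) = (2 * ρ + θ) * n + (ρ - ν * lam) * n by ring,
                Real.exp_add]
              ring
    _ = c * q ^ n * ‖((unstH f α A y z n : GL (Fin d) ℝ) : Matrix (Fin d) (Fin d) ℝ)‖ := rfl


end Analysis

end HolonomyAux

end HolonomyAux

/-- **Existence of invariant holonomies.** For a fiber-bunched twisted cocycle over a
hyperbolic homeomorphism, the stable and unstable holonomy limits exist and are invertible. -/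
theorem holonomies_exist {M : Type*} [MetricSpace M] [CompactSpace M] {d : ℕ}
    (f : M ≃ₜ M) (C ε lam τ ν : ℝ) (hν : 0 < ν)
    (hf : IsHyperbolicLPS f C ε lam τ)
    (A : M → GL (Fin d) ℝ) (α : MulAut (GL (Fin d) ℝ))
    (hA : IsHolder ν A) (hFA : FiberBunched f.toEquiv α A ν lam) :
    ∀ x : M,
      (∀ y ∈ globalStable f.toEquiv ε x, ∀ z ∈ globalStable f.toEquiv ε x,
        ∃ H : GL (Fin d) ℝ, IsStableHol f.toEquiv α A y z H) ∧
      (∀ y ∈ globalUnstable f.toEquiv ε x, ∀ z ∈ globalUnstable f.toEquiv ε x,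
        ∃ H : GL (Fin d) ℝ, IsUnstableHol f.toEquiv α A y z H) := by
  intro x
  classical
  obtain ⟨ρ, θ, hρ, hθ, hgap, Cb, hCb, hb1, hb2, hb3⟩ := hFA
  obtain ⟨CA, hCA, hA'⟩ := hA
  rcases Nat.eq_zero_or_pos d with hd0 | hd
  · -- degenerate case `d = 0`: the matrix space is a subsingleton
    subst hd0
    haveI : Subsingleton (Matrix (Fin 0) (Fin 0) ℝ) :=
      ⟨fun a b => Matrix.ext fun i _ => i.elim0⟩
    have triv : ∀ (g : ℕ → Matrix (Fin 0) (Fin 0) ℝ) (Lm : Matrix (Fin 0) (Fin 0) ℝ),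
        Filter.Tendsto g Filter.atTop (nhds Lm) := by
      intro g Lm
      have hg : g = fun _ => Lm := funext fun n => Subsingleton.elim _ _
      rw [hg]
      exact tendsto_const_nhds
    exact ⟨fun y _ z _ => ⟨1, triv _ _⟩, fun y _ z _ => ⟨1, triv _ _⟩⟩
  · -- main case
    -- a uniform bound on the inverses of A
    have hb1one : ∀ w : M,
        ‖(((α ^ (-(1:ℤ))) (A w) : GL (Fin d) ℝ) : Matrix (Fin d) (Fin d) ℝ)‖ *
          ‖(((α ^ (-(1:ℤ))) ((A w)⁻¹) : GL (Fin d) ℝ) : Matrix (Fin d) (Fin d) ℝ)‖ <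
          Cb * Real.exp θ := by
      intro w
      have h := hb1 1 w
      rw [HolonomyAux.twc_one] at h
      simpa using h
    have hb3one : ∀ T : GL (Fin d) ℝ,
        ‖(((α ^ (1:ℤ)) T : GL (Fin d) ℝ) : Matrix (Fin d) (Fin d) ℝ)‖ ≤
          Cb * Real.exp ρ * ‖(T : Matrix (Fin d) (Fin d) ℝ)‖ := by
      intro T
      have h := hb3 1 T
      simpa using h
    obtain ⟨KA, hKA0, hKAb⟩ :=
      HolonomyAux.exists_inv_bound hd x A α hν hCA hA' hCb hb1one hb3one
    constructor
    · -- stable holonomies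
      intro y hy z hz
      obtain ⟨D, hD0, hdist⟩ :=
        HolonomyAux.exists_dist_bound f.toEquiv ε C lam hf.C_pos hf.stable_contr hy hz
      have hgap1 : ρ + θ < ν * lam := by linarith
      obtain ⟨L, hL⟩ := HolonomyAux.stable_conv f.toEquiv α A hν hCA hKA0 hCb hgap1 hD0
        hA' hKAb hb1 hb2 hdist
      obtain ⟨L', hL'⟩ := HolonomyAux.stable_conv f.toEquiv α A hν hCA hKA0 hCb hgap1 hD0
        hA' hKAb hb1 hb2 (fun n => by rw [dist_comm]; exact hdist n)
      have hmul : ∀ n : ℕ,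
          ((HolonomyAux.stableH f.toEquiv α A y z n : GL (Fin d) ℝ) : Matrix (Fin d) (Fin d) ℝ) *
          ((HolonomyAux.stableH f.toEquiv α A z y n : GL (Fin d) ℝ) : Matrix (Fin d) (Fin d) ℝ)
          = 1 := by
        intro n
        have hg : HolonomyAux.stableH f.toEquiv α A y z n *
            HolonomyAux.stableH f.toEquiv α A z y n = 1 := by
          unfold HolonomyAux.stableH
          rw [← map_mul]
          rw [show ((twc f.toEquiv α A (n:ℤ) z)⁻¹ * twc f.toEquiv α A (n:ℤ) y) *
              ((twc f.toEquiv α A (n:ℤ) y)⁻¹ * twc f.toEquiv α A (n:ℤ) z) = 1 from by group]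
          rw [map_one]
        rw [← Units.val_mul, hg, Units.val_one]
      have hmul' : ∀ n : ℕ,
          ((HolonomyAux.stableH f.toEquiv α A z y n : GL (Fin d) ℝ) : Matrix (Fin d) (Fin d) ℝ) *
          ((HolonomyAux.stableH f.toEquiv α A y z n : GL (Fin d) ℝ) : Matrix (Fin d) (Fin d) ℝ)
          = 1 := by
        intro n
        have hg : HolonomyAux.stableH f.toEquiv α A z y n *
            HolonomyAux.stableH f.toEquiv α A y z n = 1 := by
          unfold HolonomyAux.stableH
          rw [← map_mul]
          rw [show ((twc f.toEquiv α A (n:ℤ) y)⁻¹ * twc f.toEquiv α A (n:ℤ) z) *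
              ((twc f.toEquiv α A (n:ℤ) z)⁻¹ * twc f.toEquiv α A (n:ℤ) y) = 1 from by group]
          rw [map_one]
        rw [← Units.val_mul, hg, Units.val_one]
      have hLL' : L * L' = 1 := by
        have t1 := hL.mul hL'
        have t2 : (fun n : ℕ =>
            ((HolonomyAux.stableH f.toEquiv α A y z n : GL (Fin d) ℝ) : Matrix (Fin d) (Fin d) ℝ) *
            ((HolonomyAux.stableH f.toEquiv α A z y n : GL (Fin d) ℝ) : Matrix (Fin d) (Fin d) ℝ))
            = fun _ => (1 : Matrix (Fin d) (Fin d) ℝ) := funext hmul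
        rw [t2] at t1
        exact (tendsto_nhds_unique t1 tendsto_const_nhds)
      have hL'L : L' * L = 1 := by
        have t1 := hL'.mul hL
        have t2 : (fun n : ℕ =>
            ((HolonomyAux.stableH f.toEquiv α A z y n : GL (Fin d) ℝ) : Matrix (Fin d) (Fin d) ℝ) *
            ((HolonomyAux.stableH f.toEquiv α A y z n : GL (Fin d) ℝ) : Matrix (Fin d) (Fin d) ℝ))
            = fun _ => (1 : Matrix (Fin d) (Fin d) ℝ) := funext hmul'
        rw [t2] at t1
        exact (tendsto_nhds_unique t1 tendsto_const_nhds)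
      exact ⟨⟨L, L', hLL', hL'L⟩, hL⟩
    · -- unstable holonomies
      intro y hy z hz
      obtain ⟨D, hD0, hdist⟩ :=
        HolonomyAux.exists_dist_bound f.toEquiv⁻¹ ε C lam hf.C_pos hf.unstable_contr hy hz
      have hgap3 : 3 * ρ + θ < ν * lam := by linarith
      obtain ⟨L, hL⟩ := HolonomyAux.unstable_conv f.toEquiv α A hν hCA hKA0 hCb hρ hθ hgap3
        hD0 hA' hKAb hb1 hb2 hb3 hdist
      obtain ⟨L', hL'⟩ := HolonomyAux.unstable_conv f.toEquiv α A hν hCA hKA0 hCb hρ hθ hgap3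
        hD0 hA' hKAb hb1 hb2 hb3 (fun n => by rw [dist_comm]; exact hdist n)
      have hmul : ∀ n : ℕ,
          ((HolonomyAux.unstH f.toEquiv α A y z n : GL (Fin d) ℝ) : Matrix (Fin d) (Fin d) ℝ) *
          ((HolonomyAux.unstH f.toEquiv α A z y n : GL (Fin d) ℝ) : Matrix (Fin d) (Fin d) ℝ)
          = 1 := by
        intro n
        have hg : HolonomyAux.unstH f.toEquiv α A y z n *
            HolonomyAux.unstH f.toEquiv α A z y n = 1 := by
          unfold HolonomyAux.unstH
          rw [← map_mul]
          rw [show ((twc f.toEquiv α A (-(n:ℤ)) z)⁻¹ * twc f.toEquiv α A (-(n:ℤ)) y) *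
              ((twc f.toEquiv α A (-(n:ℤ)) y)⁻¹ * twc f.toEquiv α A (-(n:ℤ)) z) = 1 from by group]
          rw [map_one]
        rw [← Units.val_mul, hg, Units.val_one]
      have hmul' : ∀ n : ℕ,
          ((HolonomyAux.unstH f.toEquiv α A z y n : GL (Fin d) ℝ) : Matrix (Fin d) (Fin d) ℝ) *
          ((HolonomyAux.unstH f.toEquiv α A y z n : GL (Fin d) ℝ) : Matrix (Fin d) (Fin d) ℝ)
          = 1 := by
        intro n
        have hg : HolonomyAux.unstH f.toEquiv α A z y n *
            HolonomyAux.unstH f.toEquiv α A y z n = 1 := by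
          unfold HolonomyAux.unstH
          rw [← map_mul]
          rw [show ((twc f.toEquiv α A (-(n:ℤ)) y)⁻¹ * twc f.toEquiv α A (-(n:ℤ)) z) *
              ((twc f.toEquiv α A (-(n:ℤ)) z)⁻¹ * twc f.toEquiv α A (-(n:ℤ)) y) = 1 from by group]
          rw [map_one]
        rw [← Units.val_mul, hg, Units.val_one]
      have hLL' : L * L' = 1 := by
        have t1 := hL.mul hL'
        have t2 : (fun n : ℕ =>
            ((HolonomyAux.unstH f.toEquiv α A y z n : GL (Fin d) ℝ) : Matrix (Fin d) (Fin d) ℝ) *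
            ((HolonomyAux.unstH f.toEquiv α A z y n : GL (Fin d) ℝ) : Matrix (Fin d) (Fin d) ℝ))
            = fun _ => (1 : Matrix (Fin d) (Fin d) ℝ) := funext hmul
        rw [t2] at t1
        exact (tendsto_nhds_unique t1 tendsto_const_nhds)
      have hL'L : L' * L = 1 := by
        have t1 := hL'.mul hL
        have t2 : (fun n : ℕ =>
            ((HolonomyAux.unstH f.toEquiv α A z y n : GL (Fin d) ℝ) : Matrix (Fin d) (Fin d) ℝ) *
            ((HolonomyAux.unstH f.toEquiv α A y z n : GL (Fin d) ℝ) : Matrix (Fin d) (Fin d) ℝ))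
            = fun _ => (1 : Matrix (Fin d) (Fin d) ℝ) := funext hmul'
        rw [t2] at t1
        exact (tendsto_nhds_unique t1 tendsto_const_nhds)
      exact ⟨⟨L, L', hLL', hL'L⟩, hL⟩
end

section
/- Let f : M → M be a hyperbolic homeomorphism with local product structure on a compact metric space (M,d) with contraction constants C, ε, λ, let A : M → GL(d,ℝ) be ν-Hölder continuous, α an automorphism of GL(d,ℝ), and suppose the α-twisted cocycle A_α is fiber-bunched. Then there exists a constant C' > 0, depending only on A, α and f, such that for every x ∈ M and all y, z ∈ W^s_ε(x), the stable holonomy H^{s,A,α}_{yz} = lim_{n→∞} α^{-n}(A_α^n(z)^{-1} A_α^n(y)) satisfies ‖H^{s,A,α}_{yz} − Id‖ ≤ C' d(y,z)^ν. The analogous estimate holds for the unstable holonomy H^{u,A,α}_{yz} = lim_{n→∞} α^n(A_α^{-n}(z)^{-1} A_α^{-n}(y)) when y, z ∈ W^u_ε(x). -/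
open scoped Matrix.Norms.L2Operator

section Aux

variable {M G : Type*} [Group G] (f : Equiv.Perm M) (α : MulAut G) (A : M → G)

lemma twcN_succ (n : ℕ) (x : M) :
    twcN f α A (n+1) x = A ((f ^ n) x) * α (twcN f α A n x) := rfl

lemma twcN_succ_left (n : ℕ) (x : M) :
    twcN f α A (n+1) x = twcN f α A n (f x) * (α ^ n) (A x) := by
  induction n with
  | zero => simp [twcN]
  | succ n ih =>
      rw [twcN_succ, ih, map_mul, twcN_succ]
      have h1 : (f ^ (n+1)) x = (f ^ n) (f x) := by rw [pow_succ]; rfl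
      have h2 : α ((α ^ n) (A x)) = (α ^ (n+1)) (A x) := by rw [pow_succ']; rfl
      rw [h1, h2, mul_assoc]

lemma aut_zpow_apply_zpow (a b : ℤ) (g : G) : (α ^ a) ((α ^ b) g) = (α ^ (a + b)) g := by
  rw [zpow_add]; rfl

lemma stable_step (n : ℕ) (y z : M) :
    (α ^ (-((n+1:ℕ):ℤ))) ((twcN f α A (n+1) z)⁻¹ * twcN f α A (n+1) y)
      = (α ^ (-(n:ℤ))) ((twcN f α A n z)⁻¹)
        * (α ^ (-((n+1:ℕ):ℤ))) ((A ((f ^ n) z))⁻¹ * A ((f ^ n) y))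
        * (α ^ (-(n:ℤ))) (twcN f α A n y) := by
  rw [twcN_succ, twcN_succ]
  simp only [mul_inv_rev, map_mul, map_inv]
  have e1 : (α ^ (-((n+1:ℕ):ℤ))) (α (twcN f α A n z)) = (α ^ (-(n:ℤ))) (twcN f α A n z) := by
    have h := aut_zpow_apply_zpow α (-((n+1:ℕ):ℤ)) 1 (twcN f α A n z)
    rw [zpow_one] at h
    rw [h]; norm_num
  have e2 : (α ^ (-((n+1:ℕ):ℤ))) (α (twcN f α A n y)) = (α ^ (-(n:ℤ))) (twcN f α A n y) := by
    have h := aut_zpow_apply_zpow α (-((n+1:ℕ):ℤ)) 1 (twcN f α A n y)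
    rw [zpow_one] at h
    rw [h]; norm_num
  rw [e1, e2]
  group

lemma unst_coc (n : ℕ) (x : M) :
    (α ^ (n:ℤ)) (twc f α A (-(n:ℤ)) x) = (twcN f α A n ((f⁻¹ ^ n) x))⁻¹ := by
  cases n with
  | zero => simp [twc, twcN]
  | succ n =>
      show (α ^ ((n+1:ℕ):ℤ)) (twc f α A (-((n+1:ℕ):ℤ)) x) = _
      have hd : twc f α A (-((n+1:ℕ):ℤ)) x
          = (α ^ (-((n+1:ℕ):ℤ))) ((twcN f α A (n + 1) ((f ^ (-((n+1:ℕ):ℤ))) x))⁻¹) := rfl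
      rw [hd, aut_zpow_apply_zpow]
      have : ((n+1:ℕ):ℤ) + -((n+1:ℕ):ℤ) = 0 := by ring
      rw [this, zpow_zero]
      have hp : (f ^ (-((n+1:ℕ):ℤ))) x = (f⁻¹ ^ (n+1)) x := by
        rw [zpow_neg, zpow_natCast, inv_pow]
      rw [hp]; rfl

lemma unst_E_eq (n : ℕ) (y z : M) :
    (α ^ (n:ℤ)) ((twc f α A (-(n:ℤ)) z)⁻¹ * twc f α A (-(n:ℤ)) y)
      = twcN f α A n ((f⁻¹ ^ n) z) * (twcN f α A n ((f⁻¹ ^ n) y))⁻¹ := by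
  rw [map_mul, map_inv, unst_coc, unst_coc, inv_inv]

lemma unstable_step (n : ℕ) (y z : M) :
    (α ^ ((n+1:ℕ):ℤ)) ((twc f α A (-((n+1:ℕ):ℤ)) z)⁻¹ * twc f α A (-((n+1:ℕ):ℤ)) y)
      = twcN f α A n ((f⁻¹ ^ n) z)
        * (α ^ (n:ℤ)) (A ((f⁻¹ ^ (n+1)) z) * (A ((f⁻¹ ^ (n+1)) y))⁻¹)
        * (twcN f α A n ((f⁻¹ ^ n) y))⁻¹ := by
  rw [unst_E_eq]
  have hnav : ∀ w : M, twcN f α A (n+1) ((f⁻¹ ^ (n+1)) w)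
      = twcN f α A n ((f⁻¹ ^ n) w) * (α ^ n) (A ((f⁻¹ ^ (n+1)) w)) := by
    intro w
    rw [twcN_succ_left]
    congr 2
    have : (f⁻¹ ^ (n+1)) w = f⁻¹ ((f⁻¹ ^ n) w) := by rw [pow_succ']; rfl
    rw [this]
    exact f.apply_symm_apply _
  rw [hnav, hnav]
  have hz : (α ^ (n:ℤ)) = (α ^ n) := by rw [zpow_natCast]
  rw [hz, map_mul, map_inv]
  group

lemma norm_one_le_one' {d : ℕ} : ‖(1 : Matrix (Fin d) (Fin d) ℝ)‖ ≤ 1 := by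
  rw [Matrix.cstar_norm_def, map_one]
  exact ContinuousLinearMap.norm_id_le

lemma key_est {d : ℕ} (D : ℕ → GL (Fin d) ℝ) (H : GL (Fin d) ℝ)
    (hD0 : D 0 = 1) (K r c c₀ : ℝ) (hK : 0 ≤ K) (hr0 : 0 ≤ r) (hr1 : r < 1)
    (hc : 0 ≤ c) (hcc : c ≤ c₀)
    (hstep : ∀ n : ℕ,
      ‖((D (n+1) : GL (Fin d) ℝ) : Matrix (Fin d) (Fin d) ℝ)
        - ((D n : GL (Fin d) ℝ) : Matrix (Fin d) (Fin d) ℝ)‖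
        ≤ K * r ^ n * ‖((D n : GL (Fin d) ℝ) : Matrix (Fin d) (Fin d) ℝ)‖ * c)
    (hlim : Filter.Tendsto (fun n => ((D n : GL (Fin d) ℝ) : Matrix (Fin d) (Fin d) ℝ))
      Filter.atTop (nhds (H : Matrix (Fin d) (Fin d) ℝ))) :
    ‖(H : Matrix (Fin d) (Fin d) ℝ) - 1‖
      ≤ K * Real.exp (K * c₀ * (1-r)⁻¹) * (1-r)⁻¹ * c := by
  have hc₀ : 0 ≤ c₀ := le_trans hc hcc
  have h1r : 0 < 1 - r := by linarith
  have hgeom : ∀ n : ℕ, ∑ k ∈ Finset.range n, r ^ k ≤ (1-r)⁻¹ := by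
    intro n
    have := Summable.sum_le_tsum (Finset.range n) (fun k _ => pow_nonneg hr0 k)
      (summable_geometric_of_lt_one hr0 hr1)
    rwa [tsum_geometric_of_lt_one hr0 hr1] at this
  set B := Real.exp (K * c₀ * (1-r)⁻¹) with hB
  have hu' : ∀ n : ℕ, ‖((D n : GL (Fin d) ℝ) : Matrix (Fin d) (Fin d) ℝ)‖
      ≤ Real.exp (K * c₀ * ∑ k ∈ Finset.range n, r ^ k) := by
    intro n
    induction n with
    | zero =>
        rw [hD0, Units.val_one]
        simpa using norm_one_le_one'
    | succ n ih =>
        have h1 : ‖((D (n+1) : GL (Fin d) ℝ) : Matrix (Fin d) (Fin d) ℝ)‖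
            ≤ ‖((D n : GL (Fin d) ℝ) : Matrix (Fin d) (Fin d) ℝ)‖ * (1 + K * r ^ n * c) := by
          calc ‖((D (n+1) : GL (Fin d) ℝ) : Matrix (Fin d) (Fin d) ℝ)‖
              ≤ ‖((D n : GL (Fin d) ℝ) : Matrix (Fin d) (Fin d) ℝ)‖
                + ‖((D (n+1) : GL (Fin d) ℝ) : Matrix (Fin d) (Fin d) ℝ)
                  - ((D n : GL (Fin d) ℝ) : Matrix (Fin d) (Fin d) ℝ)‖ := by
                  have := norm_add_le ((D n : GL (Fin d) ℝ) : Matrix (Fin d) (Fin d) ℝ)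
                    (((D (n+1) : GL (Fin d) ℝ) : Matrix (Fin d) (Fin d) ℝ)
                      - (D n : Matrix (Fin d) (Fin d) ℝ))
                  simpa using this
          _ ≤ ‖((D n : GL (Fin d) ℝ) : Matrix (Fin d) (Fin d) ℝ)‖
                + K * r ^ n * ‖((D n : GL (Fin d) ℝ) : Matrix (Fin d) (Fin d) ℝ)‖ * c := by
                linarith [hstep n]
          _ = ‖((D n : GL (Fin d) ℝ) : Matrix (Fin d) (Fin d) ℝ)‖ * (1 + K * r ^ n * c) := by ring
        have h2 : 1 + K * r ^ n * c ≤ Real.exp (K * c₀ * r ^ n) := by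
          have : K * r ^ n * c ≤ K * c₀ * r ^ n := by
            have := mul_le_mul_of_nonneg_left hcc (mul_nonneg hK (pow_nonneg hr0 n))
            nlinarith [pow_nonneg hr0 n]
          calc 1 + K * r ^ n * c ≤ 1 + K * c₀ * r ^ n := by linarith
          _ ≤ Real.exp (K * c₀ * r ^ n) := by
              have := Real.add_one_le_exp (K * c₀ * r ^ n); linarith
        calc ‖((D (n+1) : GL (Fin d) ℝ) : Matrix (Fin d) (Fin d) ℝ)‖
            ≤ ‖((D n : GL (Fin d) ℝ) : Matrix (Fin d) (Fin d) ℝ)‖ * (1 + K * r ^ n * c) := h1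
        _ ≤ Real.exp (K * c₀ * ∑ k ∈ Finset.range n, r ^ k) * Real.exp (K * c₀ * r ^ n) := by
            apply mul_le_mul ih h2 (by positivity) (Real.exp_nonneg _)
        _ = Real.exp (K * c₀ * ∑ k ∈ Finset.range (n+1), r ^ k) := by
            rw [← Real.exp_add, Finset.sum_range_succ, mul_add]
  have hc₀' : 0 ≤ K * c₀ := mul_nonneg hK hc₀
  have hu : ∀ n : ℕ, ‖((D n : GL (Fin d) ℝ) : Matrix (Fin d) (Fin d) ℝ)‖ ≤ B := by
    intro n
    refine le_trans (hu' n) (Real.exp_le_exp.2 ?_)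
    have := hgeom n
    nlinarith
  have hB1 : (0:ℝ) ≤ B := Real.exp_nonneg _
  have hv : ∀ n : ℕ, ‖((D n : GL (Fin d) ℝ) : Matrix (Fin d) (Fin d) ℝ) - 1‖
      ≤ K * B * (∑ k ∈ Finset.range n, r ^ k) * c := by
    intro n
    induction n with
    | zero => simp [hD0]
    | succ n ih =>
        calc ‖((D (n+1) : GL (Fin d) ℝ) : Matrix (Fin d) (Fin d) ℝ) - 1‖
            ≤ ‖((D (n+1) : GL (Fin d) ℝ) : Matrix (Fin d) (Fin d) ℝ)
                - ((D n : GL (Fin d) ℝ) : Matrix (Fin d) (Fin d) ℝ)‖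
              + ‖((D n : GL (Fin d) ℝ) : Matrix (Fin d) (Fin d) ℝ) - 1‖ :=
              norm_sub_le_norm_sub_add_norm_sub _ _ _
        _ ≤ K * r ^ n * B * c + K * B * (∑ k ∈ Finset.range n, r ^ k) * c := by
            have h3 := hstep n
            have h4 : K * r ^ n * ‖((D n : GL (Fin d) ℝ) : Matrix (Fin d) (Fin d) ℝ)‖ * c
                ≤ K * r ^ n * B * c := by
              apply mul_le_mul_of_nonneg_right _ hc
              exact mul_le_mul_of_nonneg_left (hu n) (mul_nonneg hK (pow_nonneg hr0 n))
            linarith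
        _ = K * B * (∑ k ∈ Finset.range (n+1), r ^ k) * c := by
            rw [Finset.sum_range_succ]; ring
  have hlimn : Filter.Tendsto
      (fun n => ‖((D n : GL (Fin d) ℝ) : Matrix (Fin d) (Fin d) ℝ) - 1‖)
      Filter.atTop (nhds ‖(H : Matrix (Fin d) (Fin d) ℝ) - 1‖) :=
    ((hlim.sub tendsto_const_nhds).norm)
  have := le_of_tendsto hlimn (Filter.Eventually.of_forall (fun n =>
    le_trans (hv n) (by
      have h5 : K * B * (∑ k ∈ Finset.range n, r ^ k) ≤ K * B * (1-r)⁻¹ :=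
        mul_le_mul_of_nonneg_left (hgeom n) (mul_nonneg hK hB1)
      exact mul_le_mul_of_nonneg_right h5 hc)))
  calc ‖(H : Matrix (Fin d) (Fin d) ℝ) - 1‖ ≤ K * B * (1-r)⁻¹ * c := this
  _ = K * Real.exp (K * c₀ * (1-r)⁻¹) * (1-r)⁻¹ * c := by rw [hB]

end Aux

set_option maxHeartbeats 4000000 in
/-- **Hölder estimate for holonomies.** There is a constant `C' > 0` such that for all
`y, z` in a common local stable set, `‖H^{s,A,α}_{yz} − Id‖ ≤ C' d(y,z)^ν`; the analogous
estimate holds for the unstable holonomies on local unstable sets. -/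
theorem holonomies_holder_estimate {M : Type*} [MetricSpace M] [CompactSpace M] {d : ℕ}
    (f : M ≃ₜ M) (C ε lam τ ν : ℝ) (hν : 0 < ν)
    (hf : IsHyperbolicLPS f C ε lam τ)
    (A : M → GL (Fin d) ℝ) (α : MulAut (GL (Fin d) ℝ))
    (hA : IsHolder ν A) (hFA : FiberBunched f.toEquiv α A ν lam) :
    ∃ C' > 0,
      (∀ x : M, ∀ y ∈ localStable f.toEquiv ε x, ∀ z ∈ localStable f.toEquiv ε x,
        ∀ H : GL (Fin d) ℝ, IsStableHol f.toEquiv α A y z H →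
          ‖(H : Matrix (Fin d) (Fin d) ℝ) - 1‖ ≤ C' * dist y z ^ ν) ∧
      (∀ x : M, ∀ y ∈ localUnstable f.toEquiv ε x, ∀ z ∈ localUnstable f.toEquiv ε x,
        ∀ H : GL (Fin d) ℝ, IsUnstableHol f.toEquiv α A y z H →
          ‖(H : Matrix (Fin d) (Fin d) ℝ) - 1‖ ≤ C' * dist y z ^ ν) := by
  classical
  obtain ⟨ρ, θ, hρ, hθ, hsum, C₁, hC₁, hi, hii, hiii⟩ := hFA
  obtain ⟨CA, hCA, hAH⟩ := hA
  cases isEmpty_or_nonempty M with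
  | inl hM =>
      exact ⟨1, one_pos, fun x => (hM.false x).elim, fun x => (hM.false x).elim⟩
  | inr hM =>
  haveI : CompleteSpace (Matrix (Fin d) (Fin d) ℝ) := FiniteDimensional.complete ℝ _
  set fe := f.toEquiv with hfe
  have hCf := hf.C_pos
  -- continuity of A
  have hAc : Continuous fun x : M => ((A x : Matrix (Fin d) (Fin d) ℝ)) := by
    rw [Metric.continuous_iff]
    intro b δ hδ
    refine ⟨(δ / (CA + 1)) ^ (1/ν), by positivity, fun a hab => ?_⟩
    have h1 : dist (A a : Matrix (Fin d) (Fin d) ℝ) (A b : Matrix (Fin d) (Fin d) ℝ)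
        ≤ CA * dist a b ^ ν := by
      rw [dist_eq_norm]; exact hAH a b
    have h3 : ((δ / (CA + 1)) ^ (1/ν)) ^ ν = δ / (CA+1) := by
      rw [← Real.rpow_mul (by positivity), one_div, inv_mul_cancel₀ (ne_of_gt hν),
        Real.rpow_one]
    have h2 : dist a b ^ ν < δ / (CA + 1) := by
      rw [← h3]
      exact Real.rpow_lt_rpow dist_nonneg hab hν
    calc dist (A a : Matrix (Fin d) (Fin d) ℝ) (A b : Matrix (Fin d) (Fin d) ℝ)
        ≤ CA * dist a b ^ ν := h1
    _ < CA * (δ / (CA + 1)) := mul_lt_mul_of_pos_left h2 hCA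
    _ < δ := by
        rw [mul_comm, div_mul_eq_mul_div, div_lt_iff₀ (by positivity : (0:ℝ) < CA+1)]
        nlinarith
  -- sup of inverse norms
  have hinvc : Continuous fun x : M => ‖Ring.inverse (A x : Matrix (Fin d) (Fin d) ℝ)‖ := by
    apply Continuous.norm
    apply continuous_iff_continuousAt.2
    intro x
    have hcomp : ContinuousAt (Ring.inverse ∘ (fun y : M => (A y : Matrix (Fin d) (Fin d) ℝ))) x :=
      ContinuousAt.comp (NormedRing.inverse_continuousAt (A x)) hAc.continuousAt
    exact hcomp
  obtain ⟨xm, -, hxm⟩ := IsCompact.exists_isMaxOn isCompact_univ Set.univ_nonempty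
    hinvc.continuousOn
  set Kinv := ‖Ring.inverse (A xm : Matrix (Fin d) (Fin d) ℝ)‖ with hKinvdef
  have hKinv : ∀ w : M, ‖(((A w)⁻¹ : GL (Fin d) ℝ) : Matrix (Fin d) (Fin d) ℝ)‖ ≤ Kinv := by
    intro w
    have h := hxm (Set.mem_univ w)
    simp only [Set.mem_setOf_eq] at h
    rw [← Ring.inverse_unit (A w)]
    exact h
  have hKinv0 : 0 ≤ Kinv := norm_nonneg _
  -- constants
  set r := Real.exp (θ + ρ - ν * lam) with hrdef
  have hr0 : 0 ≤ r := Real.exp_nonneg _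
  have hr1 : r < 1 := by
    rw [hrdef, Real.exp_lt_one_iff]
    linarith
  have h1r : 0 < 1 - r := by linarith
  set Ks := C₁ * (C₁ * Real.exp ρ) * (Kinv * CA * C ^ ν) with hKs
  have hKs0 : 0 ≤ Ks := by positivity
  set c₀ := (2*ε) ^ ν with hc₀def
  set C' := Ks * Real.exp (Ks * c₀ * (1-r)⁻¹) * (1-r)⁻¹ + 1 with hC'def
  have hC'0 : 0 < C' := by positivity
  have hfinish : ∀ c : ℝ, 0 ≤ c →
      Ks * Real.exp (Ks * c₀ * (1-r)⁻¹) * (1-r)⁻¹ * c ≤ C' * c := by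
    intro c hc
    apply mul_le_mul_of_nonneg_right _ hc
    rw [hC'def]; linarith
  refine ⟨C', hC'0, ?_, ?_⟩
  · -- stable case
    intro x y hy z hz H hH
    set c := dist y z ^ ν with hcdef
    have hc : 0 ≤ c := Real.rpow_nonneg dist_nonneg ν
    have hcc : c ≤ c₀ := by
      rw [hcdef, hc₀def]
      apply Real.rpow_le_rpow dist_nonneg _ hν.le
      have h0y := hy 0
      have h0z := hz 0
      simp only [pow_zero, Equiv.Perm.one_apply] at h0y h0z
      calc dist y z ≤ dist y x + dist x z := dist_triangle y x z
      _ ≤ ε + ε := by rw [dist_comm y x]; exact add_le_add h0y h0z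
      _ = 2*ε := by ring
    set D : ℕ → GL (Fin d) ℝ := fun n =>
      (α ^ (-(n:ℤ))) ((twc fe α A (n:ℤ) z)⁻¹ * twc fe α A (n:ℤ) y) with hD
    have hD0 : D 0 = 1 := by
      show (α ^ (-(0:ℤ))) ((twcN fe α A 0 z)⁻¹ * twcN fe α A 0 y) = 1
      simp [twcN]
    have hstep : ∀ n : ℕ,
        ‖((D (n+1) : GL (Fin d) ℝ) : Matrix (Fin d) (Fin d) ℝ)
          - ((D n : GL (Fin d) ℝ) : Matrix (Fin d) (Fin d) ℝ)‖
          ≤ Ks * r ^ n * ‖((D n : GL (Fin d) ℝ) : Matrix (Fin d) (Fin d) ℝ)‖ * c := by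
      intro n
      have hcast : ∀ m : ℕ, D m
          = (α ^ (-(m:ℤ))) ((twcN fe α A m z)⁻¹ * twcN fe α A m y) := by
        intro m; rw [hD]; rfl
      have hD1 : D (n+1)
          = (α ^ (-(n:ℤ))) ((twcN fe α A n z)⁻¹)
            * (α ^ (-((n+1:ℕ):ℤ))) ((A ((fe ^ n) z))⁻¹ * A ((fe ^ n) y))
            * (α ^ (-(n:ℤ))) (twcN fe α A n y) := by
        rw [hcast (n+1), stable_step]
      have hDn : D n = (α ^ (-(n:ℤ))) ((twcN fe α A n z)⁻¹)
          * (α ^ (-(n:ℤ))) (twcN fe α A n y) := by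
        rw [hcast n, map_mul]
      have hZD : (α ^ (-(n:ℤ))) (twcN fe α A n z) * D n
          = (α ^ (-(n:ℤ))) (twcN fe α A n y) := by
        rw [hcast n, ← map_mul]
        congr 1
        group
      have hmat : ((D (n+1) : GL (Fin d) ℝ) : Matrix (Fin d) (Fin d) ℝ)
            - ((D n : GL (Fin d) ℝ) : Matrix (Fin d) (Fin d) ℝ)
          = (((α ^ (-(n:ℤ))) ((twcN fe α A n z)⁻¹) : GL (Fin d) ℝ) : Matrix (Fin d) (Fin d) ℝ)
            * ((((α ^ (-((n+1:ℕ):ℤ))) ((A ((fe ^ n) z))⁻¹ * A ((fe ^ n) y)) : GL (Fin d) ℝ) :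
                Matrix (Fin d) (Fin d) ℝ) - 1)
            * (((α ^ (-(n:ℤ))) (twcN fe α A n y) : GL (Fin d) ℝ) : Matrix (Fin d) (Fin d) ℝ) := by
        rw [hD1, hDn, Units.val_mul, Units.val_mul, Units.val_mul]
        noncomm_ring
      have hRb : ‖(((α ^ (-(n:ℤ))) (twcN fe α A n y) : GL (Fin d) ℝ) : Matrix (Fin d) (Fin d) ℝ)‖
          ≤ ‖(((α ^ (-(n:ℤ))) (twcN fe α A n z) : GL (Fin d) ℝ) : Matrix (Fin d) (Fin d) ℝ)‖
            * ‖((D n : GL (Fin d) ℝ) : Matrix (Fin d) (Fin d) ℝ)‖ := by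
        rw [← hZD, Units.val_mul]
        exact norm_mul_le _ _
      have hPZ : ‖(((α ^ (-(n:ℤ))) (twcN fe α A n z) : GL (Fin d) ℝ) : Matrix (Fin d) (Fin d) ℝ)‖
            * ‖(((α ^ (-(n:ℤ))) ((twcN fe α A n z)⁻¹) : GL (Fin d) ℝ) : Matrix (Fin d) (Fin d) ℝ)‖
          ≤ C₁ * Real.exp (θ * (n:ℝ)) := by
        have h := (hi (n:ℤ) z).le
        simp only [Int.cast_natCast, Nat.abs_cast] at h
        exact h
      have hdist := hf.stable_contr x y z hy hz n
      have hdistnu : dist ((fe ^ n) y) ((fe ^ n) z) ^ ν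
          ≤ C ^ ν * Real.exp (-lam * (n:ℝ) * ν) * c := by
        calc dist ((fe ^ n) y) ((fe ^ n) z) ^ ν
            ≤ (C * Real.exp (-lam * (n:ℝ)) * dist y z) ^ ν :=
              Real.rpow_le_rpow dist_nonneg hdist hν.le
        _ = C ^ ν * Real.exp (-lam * (n:ℝ) * ν) * c := by
            rw [Real.mul_rpow (by positivity) dist_nonneg,
              Real.mul_rpow hCf.le (Real.exp_nonneg _), ← Real.exp_mul, hcdef]
      have hT : (((((A ((fe ^ n) z))⁻¹ * A ((fe ^ n) y)) : GL (Fin d) ℝ)) :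
              Matrix (Fin d) (Fin d) ℝ) - 1
          = ((((A ((fe ^ n) z))⁻¹ : GL (Fin d) ℝ)) : Matrix (Fin d) (Fin d) ℝ)
            * (((A ((fe ^ n) y) : GL (Fin d) ℝ) : Matrix (Fin d) (Fin d) ℝ)
              - ((A ((fe ^ n) z) : GL (Fin d) ℝ) : Matrix (Fin d) (Fin d) ℝ)) := by
        rw [Units.val_mul, mul_sub, Units.inv_mul]
      have hTb : ‖(((((A ((fe ^ n) z))⁻¹ * A ((fe ^ n) y)) : GL (Fin d) ℝ)) :
              Matrix (Fin d) (Fin d) ℝ) - 1‖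
          ≤ Kinv * (CA * (C ^ ν * Real.exp (-lam * (n:ℝ) * ν) * c)) := by
        rw [hT]
        refine le_trans (norm_mul_le _ _) ?_
        refine le_trans (mul_le_mul (hKinv _) (hAH _ _) (norm_nonneg _) hKinv0) ?_
        exact mul_le_mul_of_nonneg_left (le_trans (le_refl _)
          (mul_le_mul_of_nonneg_left hdistnu hCA.le) |>.trans (le_refl _)) hKinv0
      have hQb : ‖((((α ^ (-((n+1:ℕ):ℤ))) ((A ((fe ^ n) z))⁻¹ * A ((fe ^ n) y)) : GL (Fin d) ℝ) :
              Matrix (Fin d) (Fin d) ℝ)) - 1‖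
          ≤ C₁ * Real.exp (ρ * ((n:ℝ)+1))
            * (Kinv * (CA * (C ^ ν * Real.exp (-lam * (n:ℝ) * ν) * c))) := by
        have h5 := hii (-((n+1:ℕ):ℤ)) ((A ((fe ^ n) z))⁻¹ * A ((fe ^ n) y)) 1
        rw [map_one, Units.val_one] at h5
        simp only [Int.cast_neg, Int.cast_natCast, abs_neg, Nat.abs_cast, Nat.cast_add,
          Nat.cast_one, Int.cast_add, Int.cast_one] at h5
        rw [show |((n:ℝ)+1)| = (n:ℝ)+1 from abs_of_nonneg (by positivity)] at h5
        refine le_trans h5 ?_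
        exact mul_le_mul_of_nonneg_left hTb (by positivity)
      calc ‖((D (n+1) : GL (Fin d) ℝ) : Matrix (Fin d) (Fin d) ℝ)
            - ((D n : GL (Fin d) ℝ) : Matrix (Fin d) (Fin d) ℝ)‖
          = ‖(((α ^ (-(n:ℤ))) ((twcN fe α A n z)⁻¹) : GL (Fin d) ℝ) : Matrix (Fin d) (Fin d) ℝ)
            * ((((α ^ (-((n+1:ℕ):ℤ))) ((A ((fe ^ n) z))⁻¹ * A ((fe ^ n) y)) : GL (Fin d) ℝ) :
                Matrix (Fin d) (Fin d) ℝ) - 1)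
            * (((α ^ (-(n:ℤ))) (twcN fe α A n y) : GL (Fin d) ℝ) : Matrix (Fin d) (Fin d) ℝ)‖ := by
            rw [hmat]
      _ ≤ ‖(((α ^ (-(n:ℤ))) ((twcN fe α A n z)⁻¹) : GL (Fin d) ℝ) : Matrix (Fin d) (Fin d) ℝ)‖
            * ‖(((α ^ (-((n+1:ℕ):ℤ))) ((A ((fe ^ n) z))⁻¹ * A ((fe ^ n) y)) : GL (Fin d) ℝ) :
                Matrix (Fin d) (Fin d) ℝ) - 1‖
            * ‖(((α ^ (-(n:ℤ))) (twcN fe α A n y) : GL (Fin d) ℝ) : Matrix (Fin d) (Fin d) ℝ)‖ :=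
            le_trans (norm_mul_le _ _)
              (mul_le_mul_of_nonneg_right (norm_mul_le _ _) (norm_nonneg _))
      _ ≤ ‖(((α ^ (-(n:ℤ))) ((twcN fe α A n z)⁻¹) : GL (Fin d) ℝ) : Matrix (Fin d) (Fin d) ℝ)‖
            * ‖(((α ^ (-((n+1:ℕ):ℤ))) ((A ((fe ^ n) z))⁻¹ * A ((fe ^ n) y)) : GL (Fin d) ℝ) :
                Matrix (Fin d) (Fin d) ℝ) - 1‖
            * (‖(((α ^ (-(n:ℤ))) (twcN fe α A n z) : GL (Fin d) ℝ) : Matrix (Fin d) (Fin d) ℝ)‖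
              * ‖((D n : GL (Fin d) ℝ) : Matrix (Fin d) (Fin d) ℝ)‖) := by
            exact mul_le_mul_of_nonneg_left hRb (by positivity)
      _ = (‖(((α ^ (-(n:ℤ))) (twcN fe α A n z) : GL (Fin d) ℝ) : Matrix (Fin d) (Fin d) ℝ)‖
            * ‖(((α ^ (-(n:ℤ))) ((twcN fe α A n z)⁻¹) : GL (Fin d) ℝ) : Matrix (Fin d) (Fin d) ℝ)‖)
            * ‖(((α ^ (-((n+1:ℕ):ℤ))) ((A ((fe ^ n) z))⁻¹ * A ((fe ^ n) y)) : GL (Fin d) ℝ) :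
                Matrix (Fin d) (Fin d) ℝ) - 1‖
            * ‖((D n : GL (Fin d) ℝ) : Matrix (Fin d) (Fin d) ℝ)‖ := by ring
      _ ≤ (C₁ * Real.exp (θ * (n:ℝ)))
            * (C₁ * Real.exp (ρ * ((n:ℝ)+1))
              * (Kinv * (CA * (C ^ ν * Real.exp (-lam * (n:ℝ) * ν) * c))))
            * ‖((D n : GL (Fin d) ℝ) : Matrix (Fin d) (Fin d) ℝ)‖ :=
            mul_le_mul_of_nonneg_right
              (mul_le_mul hPZ hQb (norm_nonneg _) (by positivity)) (norm_nonneg _)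
      _ = Ks * r ^ n * ‖((D n : GL (Fin d) ℝ) : Matrix (Fin d) (Fin d) ℝ)‖ * c := by
            have hkey : Real.exp (θ * (n:ℝ))
                * (Real.exp (ρ * ((n:ℝ)+1)) * Real.exp (-lam * (n:ℝ) * ν))
                = Real.exp ρ * r ^ n := by
              rw [hrdef]
              rw [← Real.exp_nat_mul]
              rw [← Real.exp_add, ← Real.exp_add, ← Real.exp_add]
              congr 1
              push_cast
              ring
            rw [hKs]
            linear_combination (C₁ * C₁ * Kinv * CA * C ^ ν * c
              * ‖((D n : GL (Fin d) ℝ) : Matrix (Fin d) (Fin d) ℝ)‖) * hkey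

    have hHlim : Filter.Tendsto (fun n => ((D n : GL (Fin d) ℝ) : Matrix (Fin d) (Fin d) ℝ))
        Filter.atTop (nhds (H : Matrix (Fin d) (Fin d) ℝ)) := by
      have h := hH
      unfold IsStableHol at h
      rw [hD]
      exact h
    exact le_trans (key_est D H hD0 Ks r c c₀ hKs0 hr0 hr1 hc hcc hstep hHlim) (hfinish c hc)
  · -- unstable case
    intro x y hy z hz H hH
    set c := dist y z ^ ν with hcdef
    have hc : 0 ≤ c := Real.rpow_nonneg dist_nonneg ν
    have hcc : c ≤ c₀ := by
      rw [hcdef, hc₀def]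
      apply Real.rpow_le_rpow dist_nonneg _ hν.le
      have h0y := hy 0
      have h0z := hz 0
      simp only [pow_zero, Equiv.Perm.one_apply] at h0y h0z
      calc dist y z ≤ dist y x + dist x z := dist_triangle y x z
      _ ≤ ε + ε := by rw [dist_comm y x]; exact add_le_add h0y h0z
      _ = 2*ε := by ring
    set D : ℕ → GL (Fin d) ℝ := fun n =>
      (α ^ (n:ℤ)) ((twc fe α A (-(n:ℤ)) z)⁻¹ * twc fe α A (-(n:ℤ)) y) with hD
    have hD0 : D 0 = 1 := by
      show (α ^ (0:ℤ)) ((twcN fe α A 0 z)⁻¹ * twcN fe α A 0 y) = 1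
      simp [twcN]
    have hstep : ∀ n : ℕ,
        ‖((D (n+1) : GL (Fin d) ℝ) : Matrix (Fin d) (Fin d) ℝ)
          - ((D n : GL (Fin d) ℝ) : Matrix (Fin d) (Fin d) ℝ)‖
          ≤ Ks * r ^ n * ‖((D n : GL (Fin d) ℝ) : Matrix (Fin d) (Fin d) ℝ)‖ * c := by
      intro n
      have hcast : ∀ m : ℕ, D m
          = (α ^ (m:ℤ)) ((twc fe α A (-(m:ℤ)) z)⁻¹ * twc fe α A (-(m:ℤ)) y) := by
        intro m; rw [hD]
      have hDn : D n = twcN fe α A n ((fe⁻¹ ^ n) z) * (twcN fe α A n ((fe⁻¹ ^ n) y))⁻¹ := by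
        rw [hcast n]; exact unst_E_eq fe α A n y z
      have hD1 : D (n+1) = twcN fe α A n ((fe⁻¹ ^ n) z)
          * (α ^ (n:ℤ)) (A ((fe⁻¹ ^ (n+1)) z) * (A ((fe⁻¹ ^ (n+1)) y))⁻¹)
          * (twcN fe α A n ((fe⁻¹ ^ n) y))⁻¹ := by
        rw [hcast (n+1)]; exact unstable_step fe α A n y z
      have hZD : (twcN fe α A n ((fe⁻¹ ^ n) z))⁻¹ * D n
          = (twcN fe α A n ((fe⁻¹ ^ n) y))⁻¹ := by
        rw [hDn]; group
      have hmat : ((D (n+1) : GL (Fin d) ℝ) : Matrix (Fin d) (Fin d) ℝ)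
            - ((D n : GL (Fin d) ℝ) : Matrix (Fin d) (Fin d) ℝ)
          = ((twcN fe α A n ((fe⁻¹ ^ n) z) : GL (Fin d) ℝ) : Matrix (Fin d) (Fin d) ℝ)
            * ((((α ^ (n:ℤ)) (A ((fe⁻¹ ^ (n+1)) z) * (A ((fe⁻¹ ^ (n+1)) y))⁻¹) : GL (Fin d) ℝ) :
                Matrix (Fin d) (Fin d) ℝ) - 1)
            * (((twcN fe α A n ((fe⁻¹ ^ n) y))⁻¹ : GL (Fin d) ℝ) : Matrix (Fin d) (Fin d) ℝ) := by
        rw [hD1, hDn, Units.val_mul, Units.val_mul, Units.val_mul]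
        noncomm_ring
      have hRb : ‖(((twcN fe α A n ((fe⁻¹ ^ n) y))⁻¹ : GL (Fin d) ℝ) : Matrix (Fin d) (Fin d) ℝ)‖
          ≤ ‖(((twcN fe α A n ((fe⁻¹ ^ n) z))⁻¹ : GL (Fin d) ℝ) : Matrix (Fin d) (Fin d) ℝ)‖
            * ‖((D n : GL (Fin d) ℝ) : Matrix (Fin d) (Fin d) ℝ)‖ := by
        rw [← hZD, Units.val_mul]
        exact norm_mul_le _ _
      have hPZ : ‖((twcN fe α A n ((fe⁻¹ ^ n) z) : GL (Fin d) ℝ) : Matrix (Fin d) (Fin d) ℝ)‖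
            * ‖(((twcN fe α A n ((fe⁻¹ ^ n) z))⁻¹ : GL (Fin d) ℝ) : Matrix (Fin d) (Fin d) ℝ)‖
          ≤ C₁ * Real.exp (θ * (n:ℝ)) := by
        have h := (hi (-(n:ℤ)) z).le
        simp only [neg_neg, map_inv] at h
        rw [unst_coc] at h
        simp only [inv_inv, Int.cast_neg, Int.cast_natCast, abs_neg, Nat.abs_cast] at h
        rw [mul_comm] at h
        exact h
      have hdist := hf.unstable_contr x y z hy hz (n+1)
      rw [show ((n+1:ℕ):ℝ) = (n:ℝ)+1 by push_cast; ring] at hdist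
      have hdistnu : dist ((fe⁻¹ ^ (n+1)) z) ((fe⁻¹ ^ (n+1)) y) ^ ν
          ≤ C ^ ν * Real.exp (-lam * (n:ℝ) * ν) * c := by
        rw [dist_comm]
        calc dist ((fe⁻¹ ^ (n+1)) y) ((fe⁻¹ ^ (n+1)) z) ^ ν
            ≤ (C * Real.exp (-lam * ((n:ℝ)+1)) * dist y z) ^ ν :=
              Real.rpow_le_rpow dist_nonneg hdist hν.le
        _ ≤ (C * Real.exp (-lam * (n:ℝ)) * dist y z) ^ ν := by
            apply Real.rpow_le_rpow (by positivity) _ hν.le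
            have hle : Real.exp (-lam * ((n:ℝ)+1)) ≤ Real.exp (-lam * (n:ℝ)) :=
              Real.exp_le_exp.2 (by nlinarith [hf.lam_pos])
            exact mul_le_mul_of_nonneg_right
              (mul_le_mul_of_nonneg_left hle hCf.le) dist_nonneg
        _ = C ^ ν * Real.exp (-lam * (n:ℝ) * ν) * c := by
            rw [Real.mul_rpow (by positivity) dist_nonneg,
              Real.mul_rpow hCf.le (Real.exp_nonneg _), ← Real.exp_mul, hcdef]
      have hT : (((A ((fe⁻¹ ^ (n+1)) z) * (A ((fe⁻¹ ^ (n+1)) y))⁻¹ : GL (Fin d) ℝ)) :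
              Matrix (Fin d) (Fin d) ℝ) - 1
          = (((A ((fe⁻¹ ^ (n+1)) z) : GL (Fin d) ℝ) : Matrix (Fin d) (Fin d) ℝ)
              - ((A ((fe⁻¹ ^ (n+1)) y) : GL (Fin d) ℝ) : Matrix (Fin d) (Fin d) ℝ))
            * (((A ((fe⁻¹ ^ (n+1)) y))⁻¹ : GL (Fin d) ℝ) : Matrix (Fin d) (Fin d) ℝ) := by
        rw [Units.val_mul, sub_mul, Units.mul_inv]
      have hTb : ‖(((A ((fe⁻¹ ^ (n+1)) z) * (A ((fe⁻¹ ^ (n+1)) y))⁻¹ : GL (Fin d) ℝ)) :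
              Matrix (Fin d) (Fin d) ℝ) - 1‖
          ≤ Kinv * (CA * (C ^ ν * Real.exp (-lam * (n:ℝ) * ν) * c)) := by
        rw [hT]
        refine le_trans (norm_mul_le _ _) ?_
        calc ‖((A ((fe⁻¹ ^ (n+1)) z) : GL (Fin d) ℝ) : Matrix (Fin d) (Fin d) ℝ)
              - ((A ((fe⁻¹ ^ (n+1)) y) : GL (Fin d) ℝ) : Matrix (Fin d) (Fin d) ℝ)‖
              * ‖(((A ((fe⁻¹ ^ (n+1)) y))⁻¹ : GL (Fin d) ℝ) : Matrix (Fin d) (Fin d) ℝ)‖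
            ≤ (CA * dist ((fe⁻¹ ^ (n+1)) z) ((fe⁻¹ ^ (n+1)) y) ^ ν) * Kinv :=
              mul_le_mul (hAH _ _) (hKinv _) (norm_nonneg _) (by positivity)
        _ = Kinv * (CA * dist ((fe⁻¹ ^ (n+1)) z) ((fe⁻¹ ^ (n+1)) y) ^ ν) := by ring
        _ ≤ Kinv * (CA * (C ^ ν * Real.exp (-lam * (n:ℝ) * ν) * c)) :=
              mul_le_mul_of_nonneg_left
                (mul_le_mul_of_nonneg_left hdistnu hCA.le) hKinv0
      have hQb : ‖((((α ^ (n:ℤ)) (A ((fe⁻¹ ^ (n+1)) z) * (A ((fe⁻¹ ^ (n+1)) y))⁻¹) :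
              GL (Fin d) ℝ) : Matrix (Fin d) (Fin d) ℝ)) - 1‖
          ≤ C₁ * Real.exp (ρ * ((n:ℝ)+1))
            * (Kinv * (CA * (C ^ ν * Real.exp (-lam * (n:ℝ) * ν) * c))) := by
        have h5 := hii (n:ℤ) (A ((fe⁻¹ ^ (n+1)) z) * (A ((fe⁻¹ ^ (n+1)) y))⁻¹) 1
        rw [map_one, Units.val_one] at h5
        simp only [Int.cast_natCast, Nat.abs_cast] at h5
        refine le_trans h5 ?_
        have hexp : Real.exp (ρ * (n:ℝ)) ≤ Real.exp (ρ * ((n:ℝ)+1)) :=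
          Real.exp_le_exp.2 (by nlinarith)
        calc C₁ * Real.exp (ρ * (n:ℝ))
              * ‖(((A ((fe⁻¹ ^ (n+1)) z) * (A ((fe⁻¹ ^ (n+1)) y))⁻¹ : GL (Fin d) ℝ)) :
                  Matrix (Fin d) (Fin d) ℝ) - 1‖
            ≤ C₁ * Real.exp (ρ * ((n:ℝ)+1))
              * ‖(((A ((fe⁻¹ ^ (n+1)) z) * (A ((fe⁻¹ ^ (n+1)) y))⁻¹ : GL (Fin d) ℝ)) :
                  Matrix (Fin d) (Fin d) ℝ) - 1‖ :=
              mul_le_mul_of_nonneg_right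
                (mul_le_mul_of_nonneg_left hexp hC₁.le) (norm_nonneg _)
        _ ≤ C₁ * Real.exp (ρ * ((n:ℝ)+1))
              * (Kinv * (CA * (C ^ ν * Real.exp (-lam * (n:ℝ) * ν) * c))) :=
              mul_le_mul_of_nonneg_left hTb (by positivity)
      calc ‖((D (n+1) : GL (Fin d) ℝ) : Matrix (Fin d) (Fin d) ℝ)
            - ((D n : GL (Fin d) ℝ) : Matrix (Fin d) (Fin d) ℝ)‖
          = ‖((twcN fe α A n ((fe⁻¹ ^ n) z) : GL (Fin d) ℝ) : Matrix (Fin d) (Fin d) ℝ)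
            * ((((α ^ (n:ℤ)) (A ((fe⁻¹ ^ (n+1)) z) * (A ((fe⁻¹ ^ (n+1)) y))⁻¹) : GL (Fin d) ℝ) :
                Matrix (Fin d) (Fin d) ℝ) - 1)
            * (((twcN fe α A n ((fe⁻¹ ^ n) y))⁻¹ : GL (Fin d) ℝ) : Matrix (Fin d) (Fin d) ℝ)‖ := by
            rw [hmat]
      _ ≤ ‖((twcN fe α A n ((fe⁻¹ ^ n) z) : GL (Fin d) ℝ) : Matrix (Fin d) (Fin d) ℝ)‖
            * ‖(((α ^ (n:ℤ)) (A ((fe⁻¹ ^ (n+1)) z) * (A ((fe⁻¹ ^ (n+1)) y))⁻¹) : GL (Fin d) ℝ) :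
                Matrix (Fin d) (Fin d) ℝ) - 1‖
            * ‖(((twcN fe α A n ((fe⁻¹ ^ n) y))⁻¹ : GL (Fin d) ℝ) : Matrix (Fin d) (Fin d) ℝ)‖ :=
            le_trans (norm_mul_le _ _)
              (mul_le_mul_of_nonneg_right (norm_mul_le _ _) (norm_nonneg _))
      _ ≤ ‖((twcN fe α A n ((fe⁻¹ ^ n) z) : GL (Fin d) ℝ) : Matrix (Fin d) (Fin d) ℝ)‖
            * ‖(((α ^ (n:ℤ)) (A ((fe⁻¹ ^ (n+1)) z) * (A ((fe⁻¹ ^ (n+1)) y))⁻¹) : GL (Fin d) ℝ) :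
                Matrix (Fin d) (Fin d) ℝ) - 1‖
            * (‖(((twcN fe α A n ((fe⁻¹ ^ n) z))⁻¹ : GL (Fin d) ℝ) : Matrix (Fin d) (Fin d) ℝ)‖
              * ‖((D n : GL (Fin d) ℝ) : Matrix (Fin d) (Fin d) ℝ)‖) :=
            mul_le_mul_of_nonneg_left hRb (by positivity)
      _ = (‖((twcN fe α A n ((fe⁻¹ ^ n) z) : GL (Fin d) ℝ) : Matrix (Fin d) (Fin d) ℝ)‖
            * ‖(((twcN fe α A n ((fe⁻¹ ^ n) z))⁻¹ : GL (Fin d) ℝ) : Matrix (Fin d) (Fin d) ℝ)‖)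
            * ‖(((α ^ (n:ℤ)) (A ((fe⁻¹ ^ (n+1)) z) * (A ((fe⁻¹ ^ (n+1)) y))⁻¹) : GL (Fin d) ℝ) :
                Matrix (Fin d) (Fin d) ℝ) - 1‖
            * ‖((D n : GL (Fin d) ℝ) : Matrix (Fin d) (Fin d) ℝ)‖ := by ring
      _ ≤ (C₁ * Real.exp (θ * (n:ℝ)))
            * (C₁ * Real.exp (ρ * ((n:ℝ)+1))
              * (Kinv * (CA * (C ^ ν * Real.exp (-lam * (n:ℝ) * ν) * c))))
            * ‖((D n : GL (Fin d) ℝ) : Matrix (Fin d) (Fin d) ℝ)‖ :=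
            mul_le_mul_of_nonneg_right
              (mul_le_mul hPZ hQb (norm_nonneg _) (by positivity)) (norm_nonneg _)
      _ = Ks * r ^ n * ‖((D n : GL (Fin d) ℝ) : Matrix (Fin d) (Fin d) ℝ)‖ * c := by
            have hkey : Real.exp (θ * (n:ℝ))
                * (Real.exp (ρ * ((n:ℝ)+1)) * Real.exp (-lam * (n:ℝ) * ν))
                = Real.exp ρ * r ^ n := by
              rw [hrdef]
              rw [← Real.exp_nat_mul]
              rw [← Real.exp_add, ← Real.exp_add, ← Real.exp_add]
              congr 1
              push_cast
              ring
            rw [hKs]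
            linear_combination (C₁ * C₁ * Kinv * CA * C ^ ν * c
              * ‖((D n : GL (Fin d) ℝ) : Matrix (Fin d) (Fin d) ℝ)‖) * hkey

    have hHlim : Filter.Tendsto (fun n => ((D n : GL (Fin d) ℝ) : Matrix (Fin d) (Fin d) ℝ))
        Filter.atTop (nhds (H : Matrix (Fin d) (Fin d) ℝ)) := by
      have h := hH
      unfold IsUnstableHol at h
      rw [hD]
      exact h
    exact le_trans (key_est D H hD0 Ks r c c₀ hKs0 hr0 hr1 hc hcc hstep hHlim) (hfinish c hc)
end

section
/- Let f : M → M be a hyperbolic homeomorphism with local product structure on a compact metric space (M,d), let A : M → GL(d,ℝ) be ν-Hölder continuous, α an automorphism of GL(d,ℝ), and suppose the α-twisted cocycle A_α is fiber-bunched. Then the stable holonomies H^{s,A,α}_{yz} = lim_{n→∞} α^{-n}(A_α^n(z)^{-1} A_α^n(y)) satisfy the composition law H^{s,A,α}_{yz} = H^{s,A,α}_{xz} · H^{s,A,α}_{yx} for every x ∈ M and all y, z ∈ W^s(x); the analogous identity holds for the unstable holonomies H^{u,A,α} when y, z ∈ W^u(x). -/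
open scoped Matrix.Norms.L2Operator

/-- **Composition law for holonomies.** `H^{s,A,α}_{yz} = H^{s,A,α}_{xz} · H^{s,A,α}_{yx}`
for `y, z ∈ W^s(x)`, and analogously for the unstable holonomies on `W^u(x)`. -/
theorem holonomies_composition {M : Type*} [MetricSpace M] [CompactSpace M] {d : ℕ}
    (f : M ≃ₜ M) (C ε lam τ ν : ℝ) (hν : 0 < ν)
    (hf : IsHyperbolicLPS f C ε lam τ)
    (A : M → GL (Fin d) ℝ) (α : MulAut (GL (Fin d) ℝ))
    (hA : IsHolder ν A) (hFA : FiberBunched f.toEquiv α A ν lam) :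
    (∀ x : M, ∀ y ∈ globalStable f.toEquiv ε x, ∀ z ∈ globalStable f.toEquiv ε x,
      ∀ Hyz Hxz Hyx : GL (Fin d) ℝ,
        IsStableHol f.toEquiv α A y z Hyz → IsStableHol f.toEquiv α A x z Hxz →
          IsStableHol f.toEquiv α A y x Hyx → Hyz = Hxz * Hyx) ∧
    (∀ x : M, ∀ y ∈ globalUnstable f.toEquiv ε x, ∀ z ∈ globalUnstable f.toEquiv ε x,
      ∀ Hyz Hxz Hyx : GL (Fin d) ℝ,
        IsUnstableHol f.toEquiv α A y z Hyz → IsUnstableHol f.toEquiv α A x z Hxz →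
          IsUnstableHol f.toEquiv α A y x Hyx → Hyz = Hxz * Hyx) := by
  have key : ∀ (n : ℤ) (a b c : GL (Fin d) ℝ),
      (((α ^ n) (c⁻¹ * b) : GL (Fin d) ℝ) : Matrix (Fin d) (Fin d) ℝ) *
        (((α ^ n) (b⁻¹ * a) : GL (Fin d) ℝ) : Matrix (Fin d) (Fin d) ℝ) =
      (((α ^ n) (c⁻¹ * a) : GL (Fin d) ℝ) : Matrix (Fin d) (Fin d) ℝ) := by
    intro n a b c
    rw [← Units.val_mul, ← map_mul]
    congr 2
    group
  constructor
  · intro x y _ z _ Hyz Hxz Hyx h1 h2 h3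
    have h4 := h2.mul h3
    have heq : (fun n : ℕ =>
        (((α ^ (-(n : ℤ))) ((twc f.toEquiv α A n z)⁻¹ * twc f.toEquiv α A n x) :
            GL (Fin d) ℝ) : Matrix (Fin d) (Fin d) ℝ) *
        (((α ^ (-(n : ℤ))) ((twc f.toEquiv α A n x)⁻¹ * twc f.toEquiv α A n y) :
            GL (Fin d) ℝ) : Matrix (Fin d) (Fin d) ℝ)) =
        (fun n : ℕ =>
        (((α ^ (-(n : ℤ))) ((twc f.toEquiv α A n z)⁻¹ * twc f.toEquiv α A n y) :
            GL (Fin d) ℝ) : Matrix (Fin d) (Fin d) ℝ)) :=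
      funext fun n => key _ _ _ _
    rw [heq] at h4
    exact Units.ext (by rw [Units.val_mul]; exact tendsto_nhds_unique h1 h4)
  · intro x y _ z _ Hyz Hxz Hyx h1 h2 h3
    have h4 := h2.mul h3
    have heq : (fun n : ℕ =>
        (((α ^ (n : ℤ))
            ((twc f.toEquiv α A (-(n : ℤ)) z)⁻¹ * twc f.toEquiv α A (-(n : ℤ)) x) :
            GL (Fin d) ℝ) : Matrix (Fin d) (Fin d) ℝ) *
        (((α ^ (n : ℤ))
            ((twc f.toEquiv α A (-(n : ℤ)) x)⁻¹ * twc f.toEquiv α A (-(n : ℤ)) y) :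
            GL (Fin d) ℝ) : Matrix (Fin d) (Fin d) ℝ)) =
        (fun n : ℕ =>
        (((α ^ (n : ℤ))
            ((twc f.toEquiv α A (-(n : ℤ)) z)⁻¹ * twc f.toEquiv α A (-(n : ℤ)) y) :
            GL (Fin d) ℝ) : Matrix (Fin d) (Fin d) ℝ)) :=
      funext fun n => key _ _ _ _
    rw [heq] at h4
    exact Units.ext (by rw [Units.val_mul]; exact tendsto_nhds_unique h1 h4)
end
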